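/- arXiv:1905.01001 — 6 statements merged into one kernel-verified Lean document; each statement's English description precedes it below -/
import Mathlib

section
/- Let Λ be a finite k-graph, u a vertex of Λ, and E ⊆ uΛ^1 a finite exhaustive set. Let i ∈ {1,…,k} and e ∈ uΛ^{e_i}. If there exists a path μ with r(μ) = s(e) and d(μ) ∈ ℕe_i such that s(μ) is an absolute source (so that eμ ∈ uΛ^{ℕe_i}), then e ∈ E. -/
/-- A `k`-graph: a countable small category `Λ` together with a degree functor
`d : Λ → ℕ^k` satisfying the unique factorisation property.  A morphism in
`Hom u v` is a path with range `u` and source `v` (so `Hom u v = uΛv`), and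
`comp μ ν = μν` is defined when `s(μ) = r(ν)`. -/
structure KGraph (k : ℕ) where
  Obj : Type
  Hom : Obj → Obj → Type
  id : ∀ v : Obj, Hom v v
  comp : ∀ {u v w : Obj}, Hom u v → Hom v w → Hom u w
  id_comp : ∀ {u v : Obj} (f : Hom u v), comp (id u) f = f
  comp_id : ∀ {u v : Obj} (f : Hom u v), comp f (id v) = f
  assoc : ∀ {u v w x : Obj} (f : Hom u v) (g : Hom v w) (h : Hom w x),
    comp (comp f g) h = comp f (comp g h)
  countable : Countable (Σ u : Obj, Σ v : Obj, Hom u v)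
  deg : ∀ {u v : Obj}, Hom u v → Fin k → ℕ
  deg_id : ∀ v : Obj, deg (id v) = 0
  deg_comp : ∀ {u v w : Obj} (f : Hom u v) (g : Hom v w),
    deg (comp f g) = deg f + deg g
  factor : ∀ {u v : Obj} (f : Hom u v) (m n : Fin k → ℕ), deg f = m + n →
    ∃! p : Σ w : Obj, Hom u w × Hom w v,
      deg p.2.1 = m ∧ deg p.2.2 = n ∧ comp p.2.1 p.2.2 = f

namespace KGraph

variable {k : ℕ}

/-- Paths with range `u`: the set `uΛ`. -/
abbrev PathFrom (Λ : KGraph k) (u : Λ.Obj) : Type := Σ v : Λ.Obj, Λ.Hom u v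

/-- Paths with source `u`: the set `Λu`. -/
abbrev PathTo (Λ : KGraph k) (u : Λ.Obj) : Type := Σ v : Λ.Obj, Λ.Hom v u

/-- All paths of `Λ`. -/
abbrev Path (Λ : KGraph k) : Type := Σ u : Λ.Obj, Σ v : Λ.Obj, Λ.Hom u v

/-- `Λ` is finite if `Λ^n` is finite for every `n ∈ ℕ^k`. -/
def IsFinite (Λ : KGraph k) : Prop :=
  ∀ n : Fin k → ℕ, {p : Λ.Path | Λ.deg p.2.2 = n}.Finite

/-- The standard generator `e_i` of `ℕ^k`. -/
def gen (k : ℕ) (i : Fin k) : Fin k → ℕ := Pi.single i 1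

/-- The set of edges with range `u`: `uΛ^1 = ⋃ᵢ uΛ^{eᵢ}`. -/
def edges (Λ : KGraph k) (u : Λ.Obj) : Set (Λ.PathFrom u) :=
  {e | ∃ i : Fin k, Λ.deg e.2 = gen k i}

/-- The set `Λ^min(μ,ν)` of minimal common extensions of `μ` and `ν`:
pairs `(α, β)` with `μα = νβ` and `d(μα) = d(μ) ∨ d(ν)`. -/
def MCE (Λ : KGraph k) {u a b : Λ.Obj} (μ : Λ.Hom u a) (ν : Λ.Hom u b) :
    Set (Σ x : Λ.Obj, Λ.Hom a x × Λ.Hom b x) :=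
  {p | Λ.comp μ p.2.1 = Λ.comp ν p.2.2 ∧
    Λ.deg (Λ.comp μ p.2.1) = Λ.deg μ ⊔ Λ.deg ν}

/-- `E` is a finite exhaustive subset of `uΛ^1`: for every `μ ∈ uΛ` there is
`e ∈ E` with `Λ^min(μ,e) ≠ ∅`. -/
def IsExhaustive (Λ : KGraph k) (u : Λ.Obj) (E : Set (Λ.PathFrom u)) : Prop :=
  E ⊆ Λ.edges u ∧ E.Finite ∧
    ∀ μ : Λ.PathFrom u, ∃ e ∈ E, (Λ.MCE μ.2 e.2).Nonempty

/-- `v` is an absolute source: `vΛ^{eᵢ} = ∅` for all `i`. -/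
def IsAbsoluteSource (Λ : KGraph k) (v : Λ.Obj) : Prop :=
  ∀ (w : Λ.Obj) (f : Λ.Hom v w) (i : Fin k), Λ.deg f ≠ gen k i

end KGraph

/-- If `Λ` is a finite `k`-graph, `E ⊆ uΛ^1` is a finite exhaustive set,
`e ∈ uΛ^{e_i}`, and there is a path `μ` with `r(μ) = s(e)`, `d(μ) ∈ ℕe_i`,
whose source is an absolute source, then `e ∈ E`. -/
theorem statement0 {k : ℕ} (Λ : KGraph k) (hΛ : Λ.IsFinite)
    (u : Λ.Obj) (E : Set (Λ.PathFrom u)) (hE : Λ.IsExhaustive u E)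
    (i : Fin k) (v : Λ.Obj) (e : Λ.Hom u v) (he : Λ.deg e = KGraph.gen k i)
    (w : Λ.Obj) (μ : Λ.Hom v w) (hμ : ∃ m : ℕ, Λ.deg μ = m • KGraph.gen k i)
    (hw : Λ.IsAbsoluteSource w) :
    (⟨v, e⟩ : Λ.PathFrom u) ∈ E := by
  obtain ⟨hE1, hE2, hE3⟩ := hE
  obtain ⟨m, hm⟩ := hμ
  obtain ⟨⟨v', f⟩, hfE, ⟨x, α, β⟩, hcomm, hdeg⟩ := hE3 ⟨w, Λ.comp e μ⟩
  obtain ⟨j, hj⟩ := hE1 hfE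
  have hdem : Λ.deg (Λ.comp e μ) = (m + 1) • KGraph.gen k i := by
    rw [Λ.deg_comp, he, hm, succ_nsmul']
  rw [Λ.deg_comp, hdem, hj] at hdeg
  by_cases hji : j = i
  · -- d(f) = e_i, so d(α) = 0 and unique factorisation forces f = e
    subst hji
    have hsup : (m + 1) • KGraph.gen k j ⊔ KGraph.gen k j
        = (m + 1) • KGraph.gen k j := by
      apply sup_eq_left.mpr
      intro l
      simp only [Pi.smul_apply, smul_eq_mul]
      nlinarith [Nat.zero_le (KGraph.gen k j l)]
    rw [hsup] at hdeg
    have hα : Λ.deg α = 0 := by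
      exact add_left_cancel (hdeg.trans (add_zero _).symm)
    have hβ : Λ.deg β = m • KGraph.gen k j := by
      have h1 : Λ.deg (Λ.comp f β) = (m + 1) • KGraph.gen k j := by
        rw [← hcomm, Λ.deg_comp, hdem, hα, add_zero]
      rw [Λ.deg_comp, hj, succ_nsmul'] at h1
      exact add_left_cancel h1
    have hfac := Λ.factor (Λ.comp (Λ.comp e μ) α) (KGraph.gen k j)
      (m • KGraph.gen k j)
      (by rw [Λ.deg_comp, hdem, hα, add_zero, succ_nsmul'])
    obtain ⟨p, hp, hup⟩ := hfac
    have h1 : (⟨v, e, Λ.comp μ α⟩ : Σ w' : Λ.Obj, Λ.Hom u w' × Λ.Hom w' x) = p :=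
      hup _ ⟨he, by rw [Λ.deg_comp, hm, hα, add_zero], (Λ.assoc e μ α).symm⟩
    have h2 : (⟨v', f, β⟩ : Σ w' : Λ.Obj, Λ.Hom u w' × Λ.Hom w' x) = p :=
      hup _ ⟨hj, hβ, hcomm.symm⟩
    have h3 := h1.trans h2.symm
    have h4 : (⟨v, e⟩ : Λ.PathFrom u) = ⟨v', f⟩ :=
      congrArg (fun q : Σ w' : Λ.Obj, Λ.Hom u w' × Λ.Hom w' x =>
        (⟨q.1, q.2.1⟩ : Λ.PathFrom u)) h3
    rw [h4]
    exact hfE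
  · -- d(f) = e_j with j ≠ i forces an edge of degree e_j out of w, contradiction
    exfalso
    have hα : Λ.deg α = KGraph.gen k j := by
      have hsup : (m + 1) • KGraph.gen k i ⊔ KGraph.gen k j
          = (m + 1) • KGraph.gen k i + KGraph.gen k j := by
        funext l
        simp only [Pi.sup_apply, Pi.add_apply, Pi.smul_apply, smul_eq_mul,
          KGraph.gen, Pi.single_apply]
        by_cases hli : l = i
        · subst hli
          simp [Ne.symm hji]
        · simp [hli]
      rw [hsup] at hdeg
      exact add_left_cancel hdeg
    exact hw x α j hα
end

section
/- Let Λ be a finite 2-graph with exactly three vertices u, v, w such that |uΛ^{e_1}u| = d_1, |uΛ^{e_2}u| = d_2, |uΛ^{e_1}v| = a_1, |uΛ^{e_2}v| = a_2, |uΛ^{e_1}w| = b_1, |vΛ^{e_2}w| = b_2 with d_1, d_2, a_1, a_2, b_1, b_2 ≥ 1, and all other edge sets xΛ^{e_i}y are empty (in particular vΛ^{e_1} = ∅ and wΛ^{e_1} = wΛ^{e_2} = ∅, so w is an absolute source). Then E := (uΛ^{e_1}u ∪ uΛ^{e_2}u) ∪ uΛ^{e_2}v ∪ uΛ^{e_1}w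 is an exhaustive subset of uΛ^1, and every finite exhaustive subset of uΛ^1 contains E. -/
namespace KGraph

lemma zero_deg' {k : ℕ} (Λ : KGraph k) {a b : Λ.Obj} (f : Λ.Hom a b) (h : Λ.deg f = 0) :
    ∃ e : a = b, HEq f (Λ.id a) := by
  obtain ⟨p, hp, hu⟩ := Λ.factor f 0 0 (by simpa using h)
  have e1 := hu ⟨a, Λ.id a, f⟩ ⟨Λ.deg_id a, h, Λ.id_comp f⟩
  have e2 := hu ⟨b, f, Λ.id b⟩ ⟨h, Λ.deg_id b, Λ.comp_id f⟩
  have e3 := e1.trans e2.symm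
  obtain ⟨he, hh⟩ := Sigma.mk.inj_iff.mp e3
  subst he
  have h4 := eq_of_heq hh
  exact ⟨rfl, heq_of_eq (congrArg Prod.fst h4).symm⟩

lemma split' (Λ : KGraph 2) {a b : Λ.Obj} (f : Λ.Hom a b) (i : Fin 2)
    (h : 1 ≤ Λ.deg f i) :
    ∃ (z : Λ.Obj) (g : Λ.Hom a z) (σ : Λ.Hom z b), Λ.deg g = gen 2 i ∧
      Λ.deg σ = Λ.deg f - gen 2 i ∧ Λ.comp g σ = f := by
  have hsum : Λ.deg f = gen 2 i + (Λ.deg f - gen 2 i) := by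
    funext j
    simp only [gen, Pi.add_apply, Pi.sub_apply, Pi.single_apply]
    rcases eq_or_ne j i with rfl | hj
    · rw [if_pos rfl]
      omega
    · rw [if_neg hj]
      omega
  obtain ⟨⟨z, g, σ⟩, ⟨h1, h2, h3⟩, -⟩ := Λ.factor f (gen 2 i) (Λ.deg f - gen 2 i) hsum
  exact ⟨z, g, σ, h1, h2, h3⟩

lemma factor_unique' (Λ : KGraph 2) {u x : Λ.Obj} (f : Λ.Hom u x) (m n : Fin 2 → ℕ)
    (h : Λ.deg f = m + n) {a b : Λ.Obj} (g₁ : Λ.Hom u a) (σ₁ : Λ.Hom a x)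
    (g₂ : Λ.Hom u b) (σ₂ : Λ.Hom b x)
    (h₁ : Λ.deg g₁ = m) (h₂ : Λ.deg σ₁ = n) (hc₁ : Λ.comp g₁ σ₁ = f)
    (h₁' : Λ.deg g₂ = m) (h₂' : Λ.deg σ₂ = n) (hc₂ : Λ.comp g₂ σ₂ = f) :
    (⟨a, g₁⟩ : Λ.PathFrom u) = ⟨b, g₂⟩ := by
  obtain ⟨p, hp, hu⟩ := Λ.factor f m n h
  have e1 := hu ⟨a, g₁, σ₁⟩ ⟨h₁, h₂, hc₁⟩
  have e2 := hu ⟨b, g₂, σ₂⟩ ⟨h₁', h₂', hc₂⟩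
  have e3 := e1.trans e2.symm
  obtain ⟨he, hh⟩ := Sigma.mk.inj_iff.mp e3
  subst he
  have h4 := eq_of_heq hh
  exact congrArg (fun t => (⟨a, t⟩ : Λ.PathFrom u)) (congrArg Prod.fst h4)

end KGraph

/-- The set `E = uΛ^1u ∪ uΛ^{e₂}v ∪ uΛ^{e₁}w` of edges with range `u`. -/
def Eset (Λ : KGraph 2) (u v w : Λ.Obj) : Set (Λ.PathFrom u) :=
  {e | (e.1 = u ∧ (Λ.deg e.2 = KGraph.gen 2 0 ∨ Λ.deg e.2 = KGraph.gen 2 1)) ∨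
       (e.1 = v ∧ Λ.deg e.2 = KGraph.gen 2 1) ∨
       (e.1 = w ∧ Λ.deg e.2 = KGraph.gen 2 0)}

/-- For the 2-graph of Example 1.5 (three vertices `u, v, w`, with `w` an absolute
source), the set `E = uΛ^1u ∪ uΛ^{e₂}v ∪ uΛ^{e₁}w` is exhaustive, and every finite
exhaustive subset of `uΛ^1` contains `E`. -/
theorem statement2 (Λ : KGraph 2) (hΛ : Λ.IsFinite)
    (u v w : Λ.Obj) (huv : u ≠ v) (huw : u ≠ w) (hvw : v ≠ w)
    (hall : ∀ x : Λ.Obj, x = u ∨ x = v ∨ x = w)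
    (d₁ d₂ a₁ a₂ b₁ b₂ : ℕ)
    (hd₁ : 1 ≤ d₁) (hd₂ : 1 ≤ d₂) (ha₁ : 1 ≤ a₁) (ha₂ : 1 ≤ a₂)
    (hb₁ : 1 ≤ b₁) (hb₂ : 1 ≤ b₂)
    (hcd₁ : {f : Λ.Hom u u | Λ.deg f = KGraph.gen 2 0}.ncard = d₁)
    (hcd₂ : {f : Λ.Hom u u | Λ.deg f = KGraph.gen 2 1}.ncard = d₂)
    (hca₁ : {f : Λ.Hom u v | Λ.deg f = KGraph.gen 2 0}.ncard = a₁)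
    (hca₂ : {f : Λ.Hom u v | Λ.deg f = KGraph.gen 2 1}.ncard = a₂)
    (hcb₁ : {f : Λ.Hom u w | Λ.deg f = KGraph.gen 2 0}.ncard = b₁)
    (hcb₂ : {f : Λ.Hom v w | Λ.deg f = KGraph.gen 2 1}.ncard = b₂)
    (hempty : ∀ (x y : Λ.Obj) (i : Fin 2) (f : Λ.Hom x y), Λ.deg f = KGraph.gen 2 i →
      (x = u ∧ y = u) ∨ (x = u ∧ y = v) ∨ (x = u ∧ y = w ∧ i = 0) ∨
        (x = v ∧ y = w ∧ i = 1)) :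
    Λ.IsExhaustive u (Eset Λ u v w) ∧
      ∀ F : Set (Λ.PathFrom u), Λ.IsExhaustive u F → Eset Λ u v w ⊆ F := by
  classical
  have g01 : KGraph.gen 2 0 ⊔ KGraph.gen 2 1 = KGraph.gen 2 0 + KGraph.gen 2 1 := by
    funext j; fin_cases j <;> simp [KGraph.gen, Pi.single_apply]
  have hv0 : ∀ {z : Λ.Obj} (f : Λ.Hom v z), Λ.deg f ≠ KGraph.gen 2 0 := by
    intro z f h
    rcases hempty v z 0 f h with ⟨h1, -⟩ | ⟨h1, -⟩ | ⟨h1, -⟩ | ⟨-, -, h3⟩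
    · exact huv h1.symm
    · exact huv h1.symm
    · exact huv h1.symm
    · exact absurd h3 (by decide)
  have hw0 : ∀ {z : Λ.Obj} (f : Λ.Hom w z) (i : Fin 2), Λ.deg f ≠ KGraph.gen 2 i := by
    intro z f i h
    rcases hempty w z i f h with ⟨h1, -⟩ | ⟨h1, -⟩ | ⟨h1, -⟩ | ⟨h1, -⟩
    · exact huw h1.symm
    · exact huw h1.symm
    · exact huw h1.symm
    · exact hvw h1.symm
  have hu1 : ∀ {z : Λ.Obj} (f : Λ.Hom u z), Λ.deg f = KGraph.gen 2 1 → z = u ∨ z = v := by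
    intro z f h
    rcases hempty u z 1 f h with ⟨-, h2⟩ | ⟨-, h2⟩ | ⟨-, -, h3⟩ | ⟨h1, -⟩
    · exact Or.inl h2
    · exact Or.inr h2
    · exact absurd h3 (by decide)
    · exact absurd h1 huv
  obtain ⟨fd1, hfd1⟩ : {f : Λ.Hom u u | Λ.deg f = KGraph.gen 2 0}.Nonempty :=
    Set.nonempty_of_ncard_ne_zero (by omega)
  obtain ⟨fa2, hfa2⟩ : {f : Λ.Hom u v | Λ.deg f = KGraph.gen 2 1}.Nonempty :=
    Set.nonempty_of_ncard_ne_zero (by omega)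
  obtain ⟨fb1, hfb1⟩ : {f : Λ.Hom u w | Λ.deg f = KGraph.gen 2 0}.Nonempty :=
    Set.nonempty_of_ncard_ne_zero (by omega)
  obtain ⟨fb2, hfb2⟩ : {f : Λ.Hom v w | Λ.deg f = KGraph.gen 2 1}.Nonempty :=
    Set.nonempty_of_ncard_ne_zero (by omega)
  simp only [Set.mem_setOf_eq] at hfd1 hfa2 hfb1 hfb2
  have hsub : Eset Λ u v w ⊆ Λ.edges u := by
    rintro ⟨z, f⟩ (⟨-, h | h⟩ | ⟨-, h⟩ | ⟨-, h⟩)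
    exacts [⟨0, h⟩, ⟨1, h⟩, ⟨1, h⟩, ⟨0, h⟩]
  have hfin : (Eset Λ u v w).Finite := by
    have h0 := (hΛ (KGraph.gen 2 0)).union (hΛ (KGraph.gen 2 1))
    have h1 : (Eset Λ u v w) ⊆ (fun e : Λ.PathFrom u => (⟨u, e⟩ : Λ.Path)) ⁻¹'
        ({p : Λ.Path | Λ.deg p.2.2 = KGraph.gen 2 0} ∪
          {p : Λ.Path | Λ.deg p.2.2 = KGraph.gen 2 1}) := by
      rintro ⟨z, f⟩ (⟨-, h | h⟩ | ⟨-, h⟩ | ⟨-, h⟩)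
      exacts [Or.inl h, Or.inr h, Or.inr h, Or.inl h]
    exact (h0.preimage (sigma_mk_injective.injOn)).subset h1
  have hex : ∀ μ : Λ.PathFrom u, ∃ e ∈ Eset Λ u v w, (Λ.MCE μ.2 e.2).Nonempty := by
    rintro ⟨x, m⟩
    by_cases h2 : 1 ≤ Λ.deg m 1
    · obtain ⟨z, g, σ, hg, hσ, hc⟩ := Λ.split' m 1 h2
      have hz : z = u ∨ z = v := hu1 g hg
      refine ⟨⟨z, g⟩, ?_, ⟨⟨x, Λ.id x, σ⟩, ?_, ?_⟩⟩
      · rcases hz with hzu | hzv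
        · exact Or.inl ⟨hzu, Or.inr hg⟩
        · exact Or.inr (Or.inl ⟨hzv, hg⟩)
      · show Λ.comp m (Λ.id x) = Λ.comp g σ
        rw [Λ.comp_id]; exact hc.symm
      · show Λ.deg (Λ.comp m (Λ.id x)) = Λ.deg m ⊔ Λ.deg g
        rw [Λ.comp_id, hg]
        funext j
        simp only [Pi.sup_apply, KGraph.gen, Pi.single_apply]
        rcases eq_or_ne j 1 with rfl | hj
        · simp; omega
        · simp [hj]
    · by_cases h1 : 1 ≤ Λ.deg m 0
      · obtain ⟨z, g, σ, hg, hσ, hc⟩ := Λ.split' m 0 h1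
        rcases hall z with hzu | hzv | hzw
        · refine ⟨⟨z, g⟩, Or.inl ⟨hzu, Or.inl hg⟩, ⟨⟨x, Λ.id x, σ⟩, ?_, ?_⟩⟩
          · show Λ.comp m (Λ.id x) = Λ.comp g σ
            rw [Λ.comp_id]; exact hc.symm
          · show Λ.deg (Λ.comp m (Λ.id x)) = Λ.deg m ⊔ Λ.deg g
            rw [Λ.comp_id, hg]
            funext j
            simp only [Pi.sup_apply, KGraph.gen, Pi.single_apply]
            rcases eq_or_ne j 0 with rfl | hj
            · simp; omega
            · simp [hj]
        · -- z = v : m is (essentially) a single e₁-edge into v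
          obtain rfl := hzv.symm
          have hσ1 : Λ.deg σ 1 = 0 := by
            have h5 := congrFun hσ 1
            simp [KGraph.gen, Pi.single_apply] at h5
            omega
          have hσ0 : Λ.deg σ 0 = 0 := by
            by_contra hne
            obtain ⟨z', g', -, hg', -, -⟩ := Λ.split' σ 0 (by omega)
            exact hv0 g' hg'
          have hσz : Λ.deg σ = 0 := by
            funext j; fin_cases j
            · simpa using hσ0
            · simpa using hσ1
          obtain ⟨rfl, hid⟩ := Λ.zero_deg' σ hσz
          have hσid := eq_of_heq hid
          have hdm : Λ.deg m = KGraph.gen 2 0 := by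
            rw [← hc, Λ.deg_comp, hg, hσz, add_zero]
          have hldeg : Λ.deg (Λ.comp m fb2) = KGraph.gen 2 0 + KGraph.gen 2 1 := by
            rw [Λ.deg_comp, hdm, hfb2]
          obtain ⟨z', h', τ, hh', hτ, hclam⟩ := Λ.split' (Λ.comp m fb2) 1
            (by rw [hldeg]; simp [KGraph.gen, Pi.single_apply])
          have hz' : z' = u ∨ z' = v := hu1 h' hh'
          refine ⟨⟨z', h'⟩, ?_, ⟨⟨w, fb2, τ⟩, ?_, ?_⟩⟩
          · rcases hz' with hz'u | hz'v
            · exact Or.inl ⟨hz'u, Or.inr hh'⟩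
            · exact Or.inr (Or.inl ⟨hz'v, hh'⟩)
          · show Λ.comp m fb2 = Λ.comp h' τ
            exact hclam.symm
          · show Λ.deg (Λ.comp m fb2) = Λ.deg m ⊔ Λ.deg h'
            rw [hldeg, hdm, hh']
            exact g01.symm
        · refine ⟨⟨z, g⟩, Or.inr (Or.inr ⟨hzw, hg⟩), ⟨⟨x, Λ.id x, σ⟩, ?_, ?_⟩⟩
          · show Λ.comp m (Λ.id x) = Λ.comp g σ
            rw [Λ.comp_id]; exact hc.symm
          · show Λ.deg (Λ.comp m (Λ.id x)) = Λ.deg m ⊔ Λ.deg g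
            rw [Λ.comp_id, hg]
            funext j
            simp only [Pi.sup_apply, KGraph.gen, Pi.single_apply]
            rcases eq_or_ne j 0 with rfl | hj
            · simp; omega
            · simp [hj]
      · have hz : Λ.deg m = 0 := by
          funext j; fin_cases j
          · simpa using (by omega : Λ.deg m 0 = 0)
          · simpa using (by omega : Λ.deg m 1 = 0)
        obtain ⟨rfl, hid⟩ := Λ.zero_deg' m hz
        have hmid := eq_of_heq hid
        refine ⟨⟨u, fd1⟩, Or.inl ⟨rfl, Or.inl hfd1⟩, ⟨⟨u, fd1, Λ.id u⟩, ?_, ?_⟩⟩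
        · show Λ.comp m fd1 = Λ.comp fd1 (Λ.id u)
          rw [hmid, Λ.id_comp, Λ.comp_id]
        · show Λ.deg (Λ.comp m fd1) = Λ.deg m ⊔ Λ.deg fd1
          rw [hmid, Λ.id_comp, Λ.deg_id]
          simp
  refine ⟨⟨hsub, hfin, hex⟩, ?_⟩
  rintro F ⟨hFsub, -, hFex⟩ ⟨z, f⟩ hf
  rcases hf with ⟨hz, hdf | hdf⟩ | ⟨hz, hdf⟩ | ⟨hz, hdf⟩ <;> obtain rfl := hz.symm
  · -- f ∈ uΛ^{e₁}u : test against μ = f·fb1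
    obtain ⟨⟨y, h⟩, hyF, ⟨⟨z', α, β⟩, hc, hd⟩⟩ := hFex ⟨w, Λ.comp f fb1⟩
    obtain ⟨i, hi⟩ := hFsub hyF
    dsimp only at hc hd
    have hdm : Λ.deg (Λ.comp f fb1) = KGraph.gen 2 0 + KGraph.gen 2 0 := by
      rw [Λ.deg_comp, hdf, hfb1]
    rw [Λ.deg_comp, hdm, hi] at hd
    fin_cases i
    · have hα : Λ.deg α = 0 := by
        funext j
        have h5 := congrFun hd j
        fin_cases j <;> simp [KGraph.gen, Pi.single_apply] at h5 ⊢ <;> omega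
      obtain ⟨rfl, hα'⟩ := Λ.zero_deg' α hα
      rw [eq_of_heq hα', Λ.comp_id] at hc
      have hβ : Λ.deg β = KGraph.gen 2 0 := by
        have h6 : Λ.deg h + Λ.deg β = KGraph.gen 2 0 + KGraph.gen 2 0 := by
          rw [← Λ.deg_comp, ← hc, hdm]
        have h7 := hi
        funext j
        have h8 := congrFun h6 j
        have h9 := congrFun h7 j
        fin_cases j <;> simp [KGraph.gen, Pi.single_apply] at h8 h9 ⊢ <;> omega
      have key := Λ.factor_unique' (Λ.comp f fb1) (KGraph.gen 2 0) (KGraph.gen 2 0)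
        hdm f fb1 h β hdf hfb1 rfl (by simpa using hi) hβ hc.symm
      rw [key]; exact hyF
    · exfalso
      have hα : Λ.deg α = KGraph.gen 2 1 := by
        funext j
        have h5 := congrFun hd j
        fin_cases j <;> simp [KGraph.gen, Pi.single_apply] at h5 ⊢ <;> omega
      exact hw0 α 1 hα
  · -- f ∈ uΛ^{e₂}u : test against μ = f·fa2
    obtain ⟨⟨y, h⟩, hyF, ⟨⟨z', α, β⟩, hc, hd⟩⟩ := hFex ⟨v, Λ.comp f fa2⟩
    obtain ⟨i, hi⟩ := hFsub hyF
    dsimp only at hc hd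
    have hdm : Λ.deg (Λ.comp f fa2) = KGraph.gen 2 1 + KGraph.gen 2 1 := by
      rw [Λ.deg_comp, hdf, hfa2]
    rw [Λ.deg_comp, hdm, hi] at hd
    fin_cases i
    · exfalso
      have hα : Λ.deg α = KGraph.gen 2 0 := by
        funext j
        have h5 := congrFun hd j
        fin_cases j <;> simp [KGraph.gen, Pi.single_apply] at h5 ⊢ <;> omega
      exact hv0 α hα
    · have hα : Λ.deg α = 0 := by
        funext j
        have h5 := congrFun hd j
        fin_cases j <;> simp [KGraph.gen, Pi.single_apply] at h5 ⊢ <;> omega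
      obtain ⟨rfl, hα'⟩ := Λ.zero_deg' α hα
      rw [eq_of_heq hα', Λ.comp_id] at hc
      have hβ : Λ.deg β = KGraph.gen 2 1 := by
        have h6 : Λ.deg h + Λ.deg β = KGraph.gen 2 1 + KGraph.gen 2 1 := by
          rw [← Λ.deg_comp, ← hc, hdm]
        have h7 := hi
        funext j
        have h8 := congrFun h6 j
        have h9 := congrFun h7 j
        fin_cases j <;> simp [KGraph.gen, Pi.single_apply] at h8 h9 ⊢ <;> omega
      have key := Λ.factor_unique' (Λ.comp f fa2) (KGraph.gen 2 1) (KGraph.gen 2 1)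
        hdm f fa2 h β hdf hfa2 rfl (by simpa using hi) hβ hc.symm
      rw [key]; exact hyF
  · -- f ∈ uΛ^{e₂}v : test against μ = f itself
    obtain ⟨⟨y, h⟩, hyF, ⟨⟨z', α, β⟩, hc, hd⟩⟩ := hFex ⟨v, f⟩
    obtain ⟨i, hi⟩ := hFsub hyF
    dsimp only at hc hd
    rw [Λ.deg_comp, hdf, hi] at hd
    fin_cases i
    · exfalso
      have hα : Λ.deg α = KGraph.gen 2 0 := by
        funext j
        have h5 := congrFun hd j
        fin_cases j <;> simp [KGraph.gen, Pi.single_apply] at h5 ⊢ <;> omega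
      exact hv0 α hα
    · have hα : Λ.deg α = 0 := by
        funext j
        have h5 := congrFun hd j
        fin_cases j <;> simp [KGraph.gen, Pi.single_apply] at h5 ⊢ <;> omega
      obtain ⟨rfl, hα'⟩ := Λ.zero_deg' α hα
      rw [eq_of_heq hα', Λ.comp_id] at hc
      have hβ : Λ.deg β = 0 := by
        have h6 : Λ.deg h + Λ.deg β = KGraph.gen 2 1 := by
          rw [← Λ.deg_comp, ← hc, hdf]
        have h7 := hi
        funext j
        have h8 := congrFun h6 j
        have h9 := congrFun h7 j
        fin_cases j <;> simp [KGraph.gen, Pi.single_apply] at h8 h9 ⊢ <;> omega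
      obtain ⟨rfl, hβ'⟩ := Λ.zero_deg' β hβ
      rw [eq_of_heq hβ', Λ.comp_id] at hc
      rw [hc]; exact hyF
  · -- f ∈ uΛ^{e₁}w : test against μ = f itself
    obtain ⟨⟨y, h⟩, hyF, ⟨⟨z', α, β⟩, hc, hd⟩⟩ := hFex ⟨w, f⟩
    obtain ⟨i, hi⟩ := hFsub hyF
    dsimp only at hc hd
    rw [Λ.deg_comp, hdf, hi] at hd
    fin_cases i
    · have hα : Λ.deg α = 0 := by
        funext j
        have h5 := congrFun hd j
        fin_cases j <;> simp [KGraph.gen, Pi.single_apply] at h5 ⊢ <;> omega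
      obtain ⟨rfl, hα'⟩ := Λ.zero_deg' α hα
      rw [eq_of_heq hα', Λ.comp_id] at hc
      have hβ : Λ.deg β = 0 := by
        have h6 : Λ.deg h + Λ.deg β = KGraph.gen 2 0 := by
          rw [← Λ.deg_comp, ← hc, hdf]
        have h7 := hi
        funext j
        have h8 := congrFun h6 j
        have h9 := congrFun h7 j
        fin_cases j <;> simp [KGraph.gen, Pi.single_apply] at h8 h9 ⊢ <;> omega
      obtain ⟨rfl, hβ'⟩ := Λ.zero_deg' β hβ
      rw [eq_of_heq hβ', Λ.comp_id] at hc
      rw [hc]; exact hyF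
    · exfalso
      have hα : Λ.deg α = KGraph.gen 2 1 := by
        funext j
        have h5 := congrFun hd j
        fin_cases j <;> simp [KGraph.gen, Pi.single_apply] at h5 ⊢ <;> omega
      exact hw0 α 1 hα
end

section
/- Let Λ be a finite 2-graph with exactly two vertices u, v such that |uΛ^{e_1}u| = d_1, |uΛ^{e_2}u| = d_2, |uΛ^{e_1}v| = a_1, |uΛ^{e_2}v| = a_2 with d_1, d_2, a_1, a_2 ≥ 1, and vΛ^{e_1} = vΛ^{e_2} = ∅. Let r = (r_1, r_2) ∈ (0,∞)² and β > 0 satisfy βr_i > ln d_i for i = 1, 2. Then the series y_u := ∑_{μ ∈ Λu} e^{-βr·d(μ)} and y_v := ∑_{μ ∈ Λv} e^{-βr·d(μ)} (sums over all paths with source u, respectively v) converge, with y_u = (1 - d_1 e^{-βr_1})^{-1}(1 - d_2 e^{-βr_2})^{-1} and y_v = 1 + a_1 e^{-βr_1}(1 - d_1 e^{-βr_1})^{-1}(1 - d_2 e^{-βr_2})^{-1} + a_2 e^{-βr_2}(1 - d_2 e^{-βr_2})^{-1}. -/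
section AuxLemmas

namespace KGraph

variable {k : ℕ} {Λ : KGraph k}

lemma deg_zero_src_eq {a b : Λ.Obj} (f : Λ.Hom a b) (h : Λ.deg f = 0) : a = b := by
  obtain ⟨p, hp, hu⟩ := Λ.factor f 0 0 (by simpa using h)
  have h1 := hu ⟨b, (f, Λ.id b)⟩ ⟨h, Λ.deg_id b, Λ.comp_id f⟩
  have h2 := hu ⟨a, (Λ.id a, f)⟩ ⟨Λ.deg_id a, h, Λ.id_comp f⟩
  exact (congrArg Sigma.fst h2).trans (congrArg Sigma.fst h1).symm

lemma deg_zero_eq_id {a : Λ.Obj} (f : Λ.Hom a a) (h : Λ.deg f = 0) : f = Λ.id a := by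
  obtain ⟨p, hp, hu⟩ := Λ.factor f 0 0 (by simpa using h)
  have h1 := hu ⟨a, (f, Λ.id a)⟩ ⟨h, Λ.deg_id a, Λ.comp_id f⟩
  have h2 := hu ⟨a, (Λ.id a, f)⟩ ⟨Λ.deg_id a, h, Λ.id_comp f⟩
  have h3 := h1.trans h2.symm
  have h4 := eq_of_heq (Sigma.mk.inj_iff.mp h3).2
  exact (Prod.ext_iff.mp h4).1

lemma exists_edge {a b : Λ.Obj} (f : Λ.Hom a b) (h : Λ.deg f ≠ 0) :
    ∃ (i : Fin k) (w : Λ.Obj) (e : Λ.Hom a w), Λ.deg e = gen k i := by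
  have hex : ∃ i, Λ.deg f i ≠ 0 := by
    by_contra hc; push_neg at hc; exact h (funext fun i => hc i)
  obtain ⟨i, hi⟩ := hex
  have hsplit : Λ.deg f = gen k i + (Λ.deg f - gen k i) := by
    funext j
    simp only [Pi.add_apply, Pi.sub_apply, gen, Pi.single_apply]
    rcases eq_or_ne j i with rfl | hji
    · rw [if_pos rfl]; omega
    · simp [hji]
  obtain ⟨p, hp, -⟩ := Λ.factor f _ _ hsplit
  exact ⟨i, p.1, p.2.1, hp.1⟩

lemma src_deg_zero {v : Λ.Obj} (hsrc : Λ.IsAbsoluteSource v) {b : Λ.Obj}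
    (f : Λ.Hom v b) : Λ.deg f = 0 := by
  by_contra h
  obtain ⟨i, w, e, he⟩ := exists_edge f h
  exact hsrc w e i he

/-- Number of morphisms of a given degree. -/
noncomputable def homCount (Λ : KGraph k) (a c : Λ.Obj) (n : Fin k → ℕ) : ℕ :=
  Nat.card {f : Λ.Hom a c // Λ.deg f = n}

lemma finite_fiber (hΛ : Λ.IsFinite) (a c : Λ.Obj) (n : Fin k → ℕ) :
    Finite {f : Λ.Hom a c // Λ.deg f = n} := by
  have hfin : Finite {p : Λ.Path | Λ.deg p.2.2 = n} := (hΛ n).to_subtype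
  refine Finite.of_injective
    (fun f => (⟨⟨a, c, f.1⟩, f.2⟩ : {p : Λ.Path | Λ.deg p.2.2 = n})) ?_
  rintro ⟨f, hf⟩ ⟨g, hg⟩ h
  simp only [Subtype.mk.injEq, Sigma.mk.inj_iff, heq_eq_eq, true_and] at h
  exact Subtype.ext h

lemma homCount_id_deg (a : Λ.Obj) : Λ.homCount a a 0 = 1 := by
  haveI : Unique {f : Λ.Hom a a // Λ.deg f = 0} :=
    { default := ⟨Λ.id a, Λ.deg_id a⟩
      uniq := fun f => Subtype.ext (deg_zero_eq_id f.1 f.2) }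
  exact Nat.card_unique

lemma homCount_ne_deg_zero (a c : Λ.Obj) (h : a ≠ c) : Λ.homCount a c 0 = 0 := by
  haveI : IsEmpty {f : Λ.Hom a c // Λ.deg f = 0} :=
    ⟨fun f => h (deg_zero_src_eq f.1 f.2)⟩
  exact Nat.card_of_isEmpty

lemma homCount_src_ne {v b : Λ.Obj} (hsrc : Λ.IsAbsoluteSource v) (h : v ≠ b)
    (n : Fin k → ℕ) : Λ.homCount v b n = 0 := by
  haveI : IsEmpty {f : Λ.Hom v b // Λ.deg f = n} :=
    ⟨fun f => h (deg_zero_src_eq f.1 (src_deg_zero hsrc f.1))⟩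
  exact Nat.card_of_isEmpty

lemma homCount_src_nonzero {v : Λ.Obj} (hsrc : Λ.IsAbsoluteSource v) {b : Λ.Obj}
    {n : Fin k → ℕ} (h : n ≠ 0) : Λ.homCount v b n = 0 := by
  haveI : IsEmpty {f : Λ.Hom v b // Λ.deg f = n} :=
    ⟨fun f => h (f.2 ▸ src_deg_zero hsrc f.1)⟩
  exact Nat.card_of_isEmpty

lemma card_split (hΛ : Λ.IsFinite) {u v : Λ.Obj} (huv : u ≠ v)
    (hall : ∀ x : Λ.Obj, x = u ∨ x = v)
    (a c : Λ.Obj) (m n : Fin k → ℕ) :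
    Λ.homCount a c (m + n) =
      Λ.homCount a u m * Λ.homCount u c n + Λ.homCount a v m * Λ.homCount v c n := by
  classical
  haveI := finite_fiber hΛ a u m
  haveI := finite_fiber hΛ u c n
  haveI := finite_fiber hΛ a v m
  haveI := finite_fiber hΛ v c n
  let F : ({g : Λ.Hom a u // Λ.deg g = m} × {h : Λ.Hom u c // Λ.deg h = n}) ⊕
      ({g : Λ.Hom a v // Λ.deg g = m} × {h : Λ.Hom v c // Λ.deg h = n}) →
      {f : Λ.Hom a c // Λ.deg f = m + n} :=
    Sum.elim (fun q => ⟨Λ.comp q.1.1 q.2.1, by rw [Λ.deg_comp, q.1.2, q.2.2]⟩)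
      (fun q => ⟨Λ.comp q.1.1 q.2.1, by rw [Λ.deg_comp, q.1.2, q.2.2]⟩)
  have hbij : Function.Bijective F := by
    constructor
    · rintro (⟨⟨g, hg⟩, ⟨h, hh⟩⟩ | ⟨⟨g, hg⟩, ⟨h, hh⟩⟩)
        (⟨⟨g', hg'⟩, ⟨h', hh'⟩⟩ | ⟨⟨g', hg'⟩, ⟨h', hh'⟩⟩) hFF <;>
        [skip; skip; skip; skip] <;>
      · have hval : Λ.comp g h = Λ.comp g' h' := congrArg Subtype.val hFF
        obtain ⟨p, hp, hu⟩ := Λ.factor (Λ.comp g h) m n (by rw [Λ.deg_comp, hg, hh])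
        have e1 := hu ⟨_, (g, h)⟩ ⟨hg, hh, rfl⟩
        have e2 := hu ⟨_, (g', h')⟩ ⟨hg', hh', hval.symm⟩
        have e3 := e1.trans e2.symm
        first
        | · exact absurd (congrArg Sigma.fst e3) huv
        | · exact absurd (congrArg Sigma.fst e3).symm huv
        | · have h4 := eq_of_heq (Sigma.mk.inj_iff.mp e3).2
            obtain ⟨hgg, hhh⟩ := Prod.ext_iff.mp h4
            subst hgg; subst hhh; rfl
    · rintro ⟨f, hf⟩
      obtain ⟨⟨w, g, h⟩, ⟨hg, hh, hcomp⟩, -⟩ := Λ.factor f m n hf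
      rcases hall w with rfl | rfl
      · exact ⟨.inl ⟨⟨g, hg⟩, ⟨h, hh⟩⟩, Subtype.ext hcomp⟩
      · exact ⟨.inr ⟨⟨g, hg⟩, ⟨h, hh⟩⟩, Subtype.ext hcomp⟩
  have hcard := Nat.card_eq_of_bijective F hbij
  rw [Nat.card_sum, Nat.card_prod, Nat.card_prod] at hcard
  exact hcard.symm

end KGraph

end AuxLemmas
section Aux2

namespace KGraph

variable {Λ : KGraph 2}

lemma pair_eta (n : Fin 2 → ℕ) : n = ![n 0, n 1] := by
  funext i; fin_cases i <;> rfl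

lemma pair_add (a b c d : ℕ) : (![a, b] + ![c, d] : Fin 2 → ℕ) = ![a + c, b + d] := by
  funext i; fin_cases i <;> rfl

lemma gen_zero : gen 2 0 = ![1, 0] := by
  funext i; fin_cases i <;> simp [gen]

lemma gen_one : gen 2 1 = ![0, 1] := by
  funext i; fin_cases i <;> simp [gen]

lemma pair_congr {a a' b b' : ℕ} (h1 : a = a') (h2 : b = b') :
    (![a, b] : Fin 2 → ℕ) = ![a', b'] := by rw [h1, h2]

lemma pair_zero : (![0, 0] : Fin 2 → ℕ) = 0 := by
  funext i; fin_cases i <;> rfl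

lemma pair_ne_zero_left (a b : ℕ) : (![a + 1, b] : Fin 2 → ℕ) ≠ 0 := fun h => by
  have := congrFun h 0; simp at this

lemma pair_ne_zero_right (a b : ℕ) : (![a, b + 1] : Fin 2 → ℕ) ≠ 0 := fun h => by
  have := congrFun h 1; simp at this

lemma gen_ne_zero (i : Fin 2) : gen 2 i ≠ 0 := fun h => by
  have := congrFun h i; simp [gen] at this

variable (hΛ : Λ.IsFinite) {u v : Λ.Obj} (huv : u ≠ v)
  (hall : ∀ x : Λ.Obj, x = u ∨ x = v) (hsrc : Λ.IsAbsoluteSource v)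
  {d₁ d₂ a₁ a₂ : ℕ}
  (hgd₁ : Λ.homCount u u (gen 2 0) = d₁) (hgd₂ : Λ.homCount u u (gen 2 1) = d₂)
  (hga₁ : Λ.homCount u v (gen 2 0) = a₁) (hga₂ : Λ.homCount u v (gen 2 1) = a₂)

include hΛ huv hall hsrc

include hgd₂ in
lemma count_uu_col : ∀ n₂ : ℕ, Λ.homCount u u ![0, n₂] = d₂ ^ n₂ := by
  intro n₂
  induction n₂ with
  | zero => rw [pair_zero, homCount_id_deg]; simp
  | succ n ih =>
    have h : (![0, n + 1] : Fin 2 → ℕ) = gen 2 1 + ![0, n] := by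
      rw [gen_one, pair_add]; try exact pair_congr (by omega) (by omega)
    rw [h, card_split hΛ huv hall, hgd₂, ih, homCount_src_ne hsrc (Ne.symm huv)]
    ring

include hgd₁ hgd₂ in
lemma count_uu : ∀ n₁ n₂ : ℕ, Λ.homCount u u ![n₁, n₂] = d₁ ^ n₁ * d₂ ^ n₂ := by
  intro n₁
  induction n₁ with
  | zero =>
    intro n₂
    rw [count_uu_col hΛ huv hall hsrc hgd₂]
    simp
  | succ n ih =>
    intro n₂
    have h : (![n + 1, n₂] : Fin 2 → ℕ) = gen 2 0 + ![n, n₂] := by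
      rw [gen_zero, pair_add]; try exact pair_congr (by omega) (by omega)
    rw [h, card_split hΛ huv hall, hgd₁, ih, homCount_src_ne hsrc (Ne.symm huv)]
    ring

include hgd₁ hgd₂ hga₁ hga₂ in
lemma cross_key : d₁ * a₂ = d₂ * a₁ := by
  have h1 : gen 2 0 + gen 2 1 = (![1, 1] : Fin 2 → ℕ) := by
    rw [gen_zero, gen_one, pair_add]
  have h2 : gen 2 1 + gen 2 0 = (![1, 1] : Fin 2 → ℕ) := by
    rw [gen_zero, gen_one, pair_add]
  have e1 := card_split hΛ huv hall u v (gen 2 0) (gen 2 1)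
  have e2 := card_split hΛ huv hall u v (gen 2 1) (gen 2 0)
  rw [h1, hgd₁, hga₂, hga₁, homCount_src_nonzero hsrc (gen_ne_zero 1)] at e1
  rw [h2, hgd₂, hga₂, hga₁, homCount_src_nonzero hsrc (gen_ne_zero 0)] at e2
  omega

lemma count_uv_zero : Λ.homCount u v ![0, 0] = 0 := by
  rw [pair_zero]; exact homCount_ne_deg_zero u v huv

lemma count_vv : ∀ n₁ n₂ : ℕ, Λ.homCount v v ![n₁, n₂] =
    if n₁ = 0 ∧ n₂ = 0 then 1 else 0 := by
  intro n₁ n₂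
  match n₁, n₂ with
  | 0, 0 => rw [pair_zero, homCount_id_deg]; rfl
  | 0, n + 1 =>
    rw [homCount_src_nonzero hsrc (pair_ne_zero_right 0 n)]; simp
  | m + 1, n =>
    rw [homCount_src_nonzero hsrc (pair_ne_zero_left m n)]; simp

include hgd₂ hga₂ in
lemma count_uv_col : ∀ n₂ : ℕ, Λ.homCount u v ![0, n₂ + 1] = a₂ * d₂ ^ n₂ := by
  intro n₂
  induction n₂ with
  | zero =>
    have h : (![0, 1] : Fin 2 → ℕ) = gen 2 1 + ![0, 0] := by rw [gen_one, pair_add]; try exact pair_congr (by omega) (by omega)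
    rw [h, card_split hΛ huv hall, hgd₂, hga₂, count_uv_zero hΛ huv hall hsrc,
      pair_zero, homCount_id_deg]
    ring
  | succ n ih =>
    have h : (![0, n + 2] : Fin 2 → ℕ) = gen 2 1 + ![0, n + 1] := by
      rw [gen_one, pair_add]; try exact pair_congr (by omega) (by omega)
    rw [h, card_split hΛ huv hall, hgd₂, hga₂, ih,
      homCount_src_nonzero hsrc (pair_ne_zero_right 0 n)]
    ring

include hgd₁ hgd₂ hga₁ hga₂ in
lemma count_uv_row : ∀ n₁ n₂ : ℕ,
    Λ.homCount u v ![n₁ + 1, n₂] = a₁ * d₁ ^ n₁ * d₂ ^ n₂ := by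
  have hbase : ∀ n₂ : ℕ, Λ.homCount u v ![1, n₂] = a₁ * d₂ ^ n₂ := by
    intro n₂
    have h : (![1, n₂] : Fin 2 → ℕ) = gen 2 0 + ![0, n₂] := by
      rw [gen_zero, pair_add]; try exact pair_congr (by omega) (by omega)
    rw [h, card_split hΛ huv hall, hgd₁, hga₁, count_vv hΛ huv hall hsrc]
    match n₂ with
    | 0 =>
      rw [count_uv_zero hΛ huv hall hsrc]
      simp
    | n + 1 =>
      rw [count_uv_col hΛ huv hall hsrc hgd₂ hga₂]
      have hk := cross_key hΛ huv hall hsrc hgd₁ hgd₂ hga₁ hga₂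
      simp only [Nat.succ_ne_zero, and_false, if_false, mul_zero, add_zero]
      calc d₁ * (a₂ * d₂ ^ n) = d₁ * a₂ * d₂ ^ n := by ring
        _ = d₂ * a₁ * d₂ ^ n := by rw [hk]
        _ = a₁ * d₂ ^ (n + 1) := by ring
  intro n₁
  induction n₁ with
  | zero => intro n₂; rw [hbase]; ring
  | succ n ih =>
    intro n₂
    have h : (![n + 2, n₂] : Fin 2 → ℕ) = gen 2 0 + ![n + 1, n₂] := by
      rw [gen_zero, pair_add]; try exact pair_congr (by omega) (by omega)
    rw [h, card_split hΛ huv hall, hgd₁, hga₁, ih,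
      count_vv hΛ huv hall hsrc]
    simp only [Nat.succ_ne_zero, false_and, if_false, mul_zero, add_zero]
    ring

omit hΛ huv hall hsrc

lemma hasSum_sigma_count {ι : Type} {F : ι → Type} [hF : ∀ i, Finite (F i)]
    (w : ι → ℝ) (hw : ∀ i, 0 ≤ w i) {S : ℝ}
    (h : HasSum (fun i => (Nat.card (F i) : ℝ) * w i) S) :
    HasSum (fun p : Σ i, F i => w p.1) S := by
  classical
  haveI : ∀ i, Fintype (F i) := fun i => Fintype.ofFinite (F i)
  have hfib : ∀ i, HasSum (fun _ : F i => w i) ((Nat.card (F i) : ℝ) * w i) := by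
    intro i
    have h0 := hasSum_fintype (fun _ : F i => w i)
    simpa [Finset.sum_const, Nat.card_eq_fintype_card, nsmul_eq_mul] using h0
  have hsummable : Summable (fun p : Σ i, F i => w p.1) := by
    rw [summable_sigma_of_nonneg (fun p => hw p.1)]
    exact ⟨fun i => (hfib i).summable,
      h.summable.congr fun i => ((hfib i).tsum_eq).symm⟩
  exact h.sigma_of_hasSum hfib hsummable

end KGraph

end Aux2
section Aux3

namespace KGraph

variable {Λ : KGraph 2} {u v : Λ.Obj}

def pathFiberMap (u v : Λ.Obj) (c : Λ.Obj) (p : ℕ × ℕ) :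
    ({f : Λ.Hom u c // Λ.deg f = ![p.1, p.2]} ⊕
      {f : Λ.Hom v c // Λ.deg f = ![p.1, p.2]}) →
      {μ : Λ.PathTo c // (Λ.deg μ.2 0, Λ.deg μ.2 1) = p} :=
  Sum.elim
    (fun f => ⟨⟨u, f.1⟩, by rw [show Λ.deg f.1 = ![p.1, p.2] from f.2]; rfl⟩)
    (fun f => ⟨⟨v, f.1⟩, by rw [show Λ.deg f.1 = ![p.1, p.2] from f.2]; rfl⟩)

lemma pathFiberMap_bijective (huv : u ≠ v) (hall : ∀ x : Λ.Obj, x = u ∨ x = v)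
    (c : Λ.Obj) (p : ℕ × ℕ) : Function.Bijective (pathFiberMap u v c p) := by
  constructor
  · rintro (⟨f, hf⟩ | ⟨f, hf⟩) (⟨g, hg⟩ | ⟨g, hg⟩) h <;>
      simp only [pathFiberMap, Sum.elim_inl, Sum.elim_inr, Subtype.mk.injEq,
        Sigma.mk.inj_iff] at h
    · cases eq_of_heq h.2; rfl
    · exact absurd h.1 huv
    · exact absurd h.1 (Ne.symm huv)
    · cases eq_of_heq h.2; rfl
  · rintro ⟨⟨w, f⟩, hp⟩
    have hdeg : Λ.deg f = ![p.1, p.2] := by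
      have h0 : Λ.deg f 0 = p.1 := by rw [← hp]
      have h1 : Λ.deg f 1 = p.2 := by rw [← hp]
      rw [pair_eta (Λ.deg f), h0, h1]
    rcases hall w with rfl | rfl
    · exact ⟨.inl ⟨f, hdeg⟩, rfl⟩
    · exact ⟨.inr ⟨f, hdeg⟩, rfl⟩

lemma finite_pathFiber (hΛ : Λ.IsFinite) (huv : u ≠ v)
    (hall : ∀ x : Λ.Obj, x = u ∨ x = v) (c : Λ.Obj) (p : ℕ × ℕ) :
    Finite {μ : Λ.PathTo c // (Λ.deg μ.2 0, Λ.deg μ.2 1) = p} := by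
  haveI := finite_fiber hΛ u c ![p.1, p.2]
  haveI := finite_fiber hΛ v c ![p.1, p.2]
  exact Finite.of_surjective _ (pathFiberMap_bijective huv hall c p).surjective

lemma card_pathFiber (hΛ : Λ.IsFinite) (huv : u ≠ v)
    (hall : ∀ x : Λ.Obj, x = u ∨ x = v) (c : Λ.Obj) (p : ℕ × ℕ) :
    Nat.card {μ : Λ.PathTo c // (Λ.deg μ.2 0, Λ.deg μ.2 1) = p} =
      Λ.homCount u c ![p.1, p.2] + Λ.homCount v c ![p.1, p.2] := by
  haveI := finite_fiber hΛ u c ![p.1, p.2]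
  haveI := finite_fiber hΛ v c ![p.1, p.2]
  rw [← Nat.card_eq_of_bijective _ (pathFiberMap_bijective huv hall c p),
    Nat.card_sum]
  rfl

def pathToEquiv (Λ : KGraph 2) (c : Λ.Obj) :
    (Σ p : ℕ × ℕ, {μ : Λ.PathTo c // (Λ.deg μ.2 0, Λ.deg μ.2 1) = p}) ≃
      Λ.PathTo c where
  toFun q := q.2.1
  invFun μ := ⟨(Λ.deg μ.2 0, Λ.deg μ.2 1), μ, rfl⟩
  left_inv := by
    rintro ⟨⟨n₁, n₂⟩, μ, hμ⟩
    simp only [Prod.mk.injEq] at hμ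
    obtain ⟨h0, h1⟩ := hμ
    subst h0; subst h1; rfl
  right_inv := fun μ => rfl

end KGraph

end Aux3
/-- For the 2-graph with two vertices `u, v` (with `v` an absolute source),
the series `y_u = ∑_{μ ∈ Λu} e^{-βr·d(μ)}` and `y_v = ∑_{μ ∈ Λv} e^{-βr·d(μ)}`
converge, with the stated sums. -/
theorem statement4 (Λ : KGraph 2) (hΛ : Λ.IsFinite)
    (u v : Λ.Obj) (huv : u ≠ v) (hall : ∀ x : Λ.Obj, x = u ∨ x = v)
    (d₁ d₂ a₁ a₂ : ℕ)
    (hd₁ : 1 ≤ d₁) (hd₂ : 1 ≤ d₂) (ha₁ : 1 ≤ a₁) (ha₂ : 1 ≤ a₂)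
    (hcd₁ : {f : Λ.Hom u u | Λ.deg f = KGraph.gen 2 0}.ncard = d₁)
    (hcd₂ : {f : Λ.Hom u u | Λ.deg f = KGraph.gen 2 1}.ncard = d₂)
    (hca₁ : {f : Λ.Hom u v | Λ.deg f = KGraph.gen 2 0}.ncard = a₁)
    (hca₂ : {f : Λ.Hom u v | Λ.deg f = KGraph.gen 2 1}.ncard = a₂)
    (hsrc : Λ.IsAbsoluteSource v)
    (r : Fin 2 → ℝ) (hr : ∀ i, 0 < r i) (β : ℝ) (hβ : 0 < β)
    (hβr₁ : Real.log d₁ < β * r 0) (hβr₂ : Real.log d₂ < β * r 1) :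
    HasSum
      (fun μ : Λ.PathTo u =>
        Real.exp (-(β * (r 0 * (Λ.deg μ.2 0 : ℝ) + r 1 * (Λ.deg μ.2 1 : ℝ)))))
      ((1 - (d₁ : ℝ) * Real.exp (-(β * r 0)))⁻¹ *
        (1 - (d₂ : ℝ) * Real.exp (-(β * r 1)))⁻¹) ∧
    HasSum
      (fun μ : Λ.PathTo v =>
        Real.exp (-(β * (r 0 * (Λ.deg μ.2 0 : ℝ) + r 1 * (Λ.deg μ.2 1 : ℝ)))))
      (1 + (a₁ : ℝ) * Real.exp (-(β * r 0)) *
          ((1 - (d₁ : ℝ) * Real.exp (-(β * r 0)))⁻¹ *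
            (1 - (d₂ : ℝ) * Real.exp (-(β * r 1)))⁻¹) +
        (a₂ : ℝ) * Real.exp (-(β * r 1)) *
          (1 - (d₂ : ℝ) * Real.exp (-(β * r 1)))⁻¹) := by
  classical
  have hgd₁ : Λ.homCount u u (KGraph.gen 2 0) = d₁ := hcd₁
  have hgd₂ : Λ.homCount u u (KGraph.gen 2 1) = d₂ := hcd₂
  have hga₁ : Λ.homCount u v (KGraph.gen 2 0) = a₁ := hca₁
  have hga₂ : Λ.homCount u v (KGraph.gen 2 1) = a₂ := hca₂
  set x₁ := Real.exp (-(β * r 0)) with hx₁def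
  set x₂ := Real.exp (-(β * r 1)) with hx₂def
  have hx₁pos : 0 < x₁ := Real.exp_pos _
  have hx₂pos : 0 < x₂ := Real.exp_pos _
  have hq₁nonneg : 0 ≤ (d₁ : ℝ) * x₁ := by positivity
  have hq₂nonneg : 0 ≤ (d₂ : ℝ) * x₂ := by positivity
  have hq₁lt : (d₁ : ℝ) * x₁ < 1 := by
    have hd : (0 : ℝ) < d₁ := by exact_mod_cast hd₁
    have hlt : (d₁ : ℝ) < Real.exp (β * r 0) := (Real.log_lt_iff_lt_exp hd).mp hβr₁
    have h2 := mul_lt_mul_of_pos_right hlt (Real.exp_pos (-(β * r 0)))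
    rw [← Real.exp_add] at h2
    simp only [add_neg_cancel, Real.exp_zero] at h2
    rw [hx₁def]
    exact h2
  have hq₂lt : (d₂ : ℝ) * x₂ < 1 := by
    have hd : (0 : ℝ) < d₂ := by exact_mod_cast hd₂
    have hlt : (d₂ : ℝ) < Real.exp (β * r 1) := (Real.log_lt_iff_lt_exp hd).mp hβr₂
    have h2 := mul_lt_mul_of_pos_right hlt (Real.exp_pos (-(β * r 1)))
    rw [← Real.exp_add] at h2
    simp only [add_neg_cancel, Real.exp_zero] at h2
    rw [hx₂def]
    exact h2
  have hgeo1 := hasSum_geometric_of_lt_one hq₁nonneg hq₁lt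
  have hgeo2 := hasSum_geometric_of_lt_one hq₂nonneg hq₂lt
  have hsummul : Summable (fun p : ℕ × ℕ =>
      ((d₁ : ℝ) * x₁) ^ p.1 * ((d₂ : ℝ) * x₂) ^ p.2) :=
    hgeo1.summable.mul_of_nonneg hgeo2.summable
      (fun n => pow_nonneg hq₁nonneg n) (fun n => pow_nonneg hq₂nonneg n)
  have hgeo : HasSum (fun p : ℕ × ℕ => ((d₁ : ℝ) * x₁) ^ p.1 * ((d₂ : ℝ) * x₂) ^ p.2)
      ((1 - (d₁ : ℝ) * x₁)⁻¹ * (1 - (d₂ : ℝ) * x₂)⁻¹) := hgeo1.mul hgeo2 hsummul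
  have hwt : ∀ n₁ n₂ : ℕ,
      Real.exp (-(β * (r 0 * (n₁ : ℝ) + r 1 * (n₂ : ℝ)))) = x₁ ^ n₁ * x₂ ^ n₂ := by
    intro n₁ n₂
    rw [hx₁def, hx₂def, ← Real.exp_nat_mul, ← Real.exp_nat_mul, ← Real.exp_add]
    congr 1; ring
  constructor
  · -- y_u
    haveI : ∀ p : ℕ × ℕ, Finite {μ : Λ.PathTo u // (Λ.deg μ.2 0, Λ.deg μ.2 1) = p} :=
      fun p => KGraph.finite_pathFiber hΛ huv hall u p
    have hbase : HasSum (fun p : ℕ × ℕ =>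
        (Nat.card {μ : Λ.PathTo u // (Λ.deg μ.2 0, Λ.deg μ.2 1) = p} : ℝ) *
          (x₁ ^ p.1 * x₂ ^ p.2))
        ((1 - (d₁ : ℝ) * x₁)⁻¹ * (1 - (d₂ : ℝ) * x₂)⁻¹) := by
      have hcard : ∀ p : ℕ × ℕ,
          (Nat.card {μ : Λ.PathTo u // (Λ.deg μ.2 0, Λ.deg μ.2 1) = p} : ℝ) *
            (x₁ ^ p.1 * x₂ ^ p.2)
            = ((d₁ : ℝ) * x₁) ^ p.1 * ((d₂ : ℝ) * x₂) ^ p.2 := by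
        intro p
        rw [KGraph.card_pathFiber hΛ huv hall u p,
          KGraph.count_uu hΛ huv hall hsrc hgd₁ hgd₂ p.1 p.2,
          KGraph.homCount_src_ne hsrc (Ne.symm huv)]
        push_cast
        ring
      rw [funext hcard]
      exact hgeo
    have hsig := KGraph.hasSum_sigma_count
      (F := fun p : ℕ × ℕ => {μ : Λ.PathTo u // (Λ.deg μ.2 0, Λ.deg μ.2 1) = p})
      (fun p : ℕ × ℕ => x₁ ^ p.1 * x₂ ^ p.2) (fun p => by positivity) hbase
    refine ((KGraph.pathToEquiv Λ u).hasSum_iff).mp ?_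
    have hfun : ((fun μ : Λ.PathTo u =>
        Real.exp (-(β * (r 0 * (Λ.deg μ.2 0 : ℝ) + r 1 * (Λ.deg μ.2 1 : ℝ))))) ∘
          (KGraph.pathToEquiv Λ u))
        = fun q : (Σ p : ℕ × ℕ, {μ : Λ.PathTo u // (Λ.deg μ.2 0, Λ.deg μ.2 1) = p}) =>
            x₁ ^ q.1.1 * x₂ ^ q.1.2 := by
      funext q
      obtain ⟨⟨n₁, n₂⟩, μ, hμ⟩ := q
      simp only [Prod.mk.injEq] at hμ
      obtain ⟨h0, h1⟩ := hμ
      show Real.exp (-(β * (r 0 * (Λ.deg μ.2 0 : ℝ) + r 1 * (Λ.deg μ.2 1 : ℝ)))) = _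
      rw [h0, h1, hwt]
    rw [hfun]
    exact hsig
  · -- y_v
    haveI : ∀ p : ℕ × ℕ, Finite {μ : Λ.PathTo v // (Λ.deg μ.2 0, Λ.deg μ.2 1) = p} :=
      fun p => KGraph.finite_pathFiber hΛ huv hall v p
    set f₀ : ℕ × ℕ → ℝ := fun p => if p = (0, 0) then 1 else 0 with hf₀def
    set f₁ : ℕ × ℕ → ℝ := fun p => if p.1 = 0 then 0 else
      (a₁ : ℝ) * x₁ * (((d₁ : ℝ) * x₁) ^ (p.1 - 1) * ((d₂ : ℝ) * x₂) ^ p.2) with hf₁def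
    set f₂ : ℕ × ℕ → ℝ := fun p => if p.1 = 0 ∧ p.2 ≠ 0 then
      (a₂ : ℝ) * x₂ * ((d₂ : ℝ) * x₂) ^ (p.2 - 1) else 0 with hf₂def
    have h₀ : HasSum f₀ 1 := hasSum_ite_eq (0, 0) 1
    have h₁ : HasSum f₁ ((a₁ : ℝ) * x₁ *
        ((1 - (d₁ : ℝ) * x₁)⁻¹ * (1 - (d₂ : ℝ) * x₂)⁻¹)) := by
      have hinj : Function.Injective (fun q : ℕ × ℕ => ((q.1 + 1, q.2) : ℕ × ℕ)) := by
        rintro ⟨a, b⟩ ⟨c, d⟩ h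
        simp only [Prod.mk.injEq] at h
        simp only [Prod.mk.injEq]
        omega
      refine (Function.Injective.hasSum_iff hinj ?_).mp ?_
      · rintro ⟨m, n⟩ hm
        simp only [Set.mem_range, not_exists] at hm
        have hm0 : m = 0 := by
          by_contra hm0
          have hm1 : m - 1 + 1 = m := by omega
          exact hm (m - 1, n) (by simp only [hm1])
        simp [hf₁def, hm0]
      · have hcomp : (f₁ ∘ (fun q : ℕ × ℕ => ((q.1 + 1, q.2) : ℕ × ℕ)))
            = fun q : ℕ × ℕ => (a₁ : ℝ) * x₁ *
                (((d₁ : ℝ) * x₁) ^ q.1 * ((d₂ : ℝ) * x₂) ^ q.2) := by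
          funext q
          simp [hf₁def]
        rw [hcomp]
        exact hgeo.mul_left _
    have h₂ : HasSum f₂ ((a₂ : ℝ) * x₂ * (1 - (d₂ : ℝ) * x₂)⁻¹) := by
      have hinj : Function.Injective (fun n : ℕ => ((0, n + 1) : ℕ × ℕ)) := by
        intro a b h
        simp only [Prod.mk.injEq] at h
        omega
      refine (Function.Injective.hasSum_iff hinj ?_).mp ?_
      · rintro ⟨m, n⟩ hm
        simp only [Set.mem_range, not_exists] at hm
        rcases m with _ | m
        · rcases n with _ | n
          · simp [hf₂def]
          · exact absurd rfl (hm n)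
        · simp [hf₂def]
      · have hcomp : (f₂ ∘ (fun n : ℕ => ((0, n + 1) : ℕ × ℕ)))
            = fun n : ℕ => (a₂ : ℝ) * x₂ * ((d₂ : ℝ) * x₂) ^ n := by
          funext n
          simp [hf₂def]
        rw [hcomp]
        exact hgeo2.mul_left _
    have hbase : HasSum (fun p : ℕ × ℕ =>
        (Nat.card {μ : Λ.PathTo v // (Λ.deg μ.2 0, Λ.deg μ.2 1) = p} : ℝ) *
          (x₁ ^ p.1 * x₂ ^ p.2))
        (1 + (a₁ : ℝ) * x₁ * ((1 - (d₁ : ℝ) * x₁)⁻¹ * (1 - (d₂ : ℝ) * x₂)⁻¹) +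
          (a₂ : ℝ) * x₂ * (1 - (d₂ : ℝ) * x₂)⁻¹) := by
      have hfeq : (fun p : ℕ × ℕ =>
          (Nat.card {μ : Λ.PathTo v // (Λ.deg μ.2 0, Λ.deg μ.2 1) = p} : ℝ) *
            (x₁ ^ p.1 * x₂ ^ p.2))
          = fun p => f₀ p + f₁ p + f₂ p := by
        funext p
        obtain ⟨m, n⟩ := p
        rw [KGraph.card_pathFiber hΛ huv hall v (m, n), KGraph.count_vv hΛ huv hall hsrc]
        match m, n with
        | 0, 0 =>
          rw [KGraph.count_uv_zero hΛ huv hall hsrc]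
          simp [hf₀def, hf₁def, hf₂def]
        | 0, n + 1 =>
          rw [KGraph.count_uv_col hΛ huv hall hsrc hgd₂ hga₂]
          simp only [hf₀def, hf₁def, hf₂def, Prod.mk.injEq, Nat.succ_ne_zero, and_false,
            if_false, if_true, ne_eq, not_false_iff, and_true, and_self, true_and,
            Nat.add_sub_cancel, if_pos rfl]
          push_cast
          ring
        | m + 1, n =>
          rw [KGraph.count_uv_row hΛ huv hall hsrc hgd₁ hgd₂ hga₁ hga₂]
          simp only [hf₀def, hf₁def, hf₂def, Prod.mk.injEq, Nat.succ_ne_zero, and_false,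
            if_false, false_and, Nat.add_sub_cancel]
          push_cast
          ring
      rw [hfeq]
      exact (h₀.add h₁).add h₂
    have hsig := KGraph.hasSum_sigma_count
      (F := fun p : ℕ × ℕ => {μ : Λ.PathTo v // (Λ.deg μ.2 0, Λ.deg μ.2 1) = p})
      (fun p : ℕ × ℕ => x₁ ^ p.1 * x₂ ^ p.2) (fun p => by positivity) hbase
    refine ((KGraph.pathToEquiv Λ v).hasSum_iff).mp ?_
    have hfun : ((fun μ : Λ.PathTo v =>
        Real.exp (-(β * (r 0 * (Λ.deg μ.2 0 : ℝ) + r 1 * (Λ.deg μ.2 1 : ℝ))))) ∘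
          (KGraph.pathToEquiv Λ v))
        = fun q : (Σ p : ℕ × ℕ, {μ : Λ.PathTo v // (Λ.deg μ.2 0, Λ.deg μ.2 1) = p}) =>
            x₁ ^ q.1.1 * x₂ ^ q.1.2 := by
      funext q
      obtain ⟨⟨n₁, n₂⟩, μ, hμ⟩ := q
      simp only [Prod.mk.injEq] at hμ
      obtain ⟨h0, h1⟩ := hμ
      show Real.exp (-(β * (r 0 * (Λ.deg μ.2 0 : ℝ) + r 1 * (Λ.deg μ.2 1 : ℝ)))) = _
      rw [h0, h1, hwt]
    rw [hfun]
    exact hsig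
end

section
/- Let d_1, d_2, a_1, a_2, b_1, b_2, c_1, c_2, g_1, f_1, f_2 be positive real numbers satisfying d_1 a_2 = d_2 a_1, a_1 b_2 = d_2 b_1, a_2 g_1 = b_1 c_2, g_1 f_2 = b_2 c_1, c_1 f_2 = c_2 f_1, and f_2 > d_2. Define the 4×4 real matrices A_1 = [[d_1, a_1, b_1, 0],[0, 0, 0, g_1],[0, 0, 0, c_1],[0, 0, 0, f_1]] and A_2 = [[d_2, a_2, 0, 0],[0, 0, b_2, 0],[0, 0, 0, c_2],[0, 0, 0, f_2]], and the vector z := ((f_2 - d_2)^{-1} f_2^{-2} a_2 b_2 c_2, f_2^{-2} b_2 c_2, f_2^{-1} c_2, 1) ∈ ℝ⁴. Then A_1 z = f_1 z and A_2 z = f_2 z. -/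
/-- The vector `z = ((f₂-d₂)⁻¹f₂⁻²a₂b₂c₂, f₂⁻²b₂c₂, f₂⁻¹c₂, 1)` is a common
eigenvector of the vertex matrices `A₁` and `A₂`, with eigenvalues `f₁` and `f₂`. -/
theorem statement12 (d₁ d₂ a₁ a₂ b₁ b₂ c₁ c₂ g₁ f₁ f₂ : ℝ)
    (hd₁ : 0 < d₁) (hd₂ : 0 < d₂) (ha₁ : 0 < a₁) (ha₂ : 0 < a₂)
    (hb₁ : 0 < b₁) (hb₂ : 0 < b₂) (hc₁ : 0 < c₁) (hc₂ : 0 < c₂)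
    (hg₁ : 0 < g₁) (hf₁ : 0 < f₁) (hf₂ : 0 < f₂)
    (hrel₁ : d₁ * a₂ = d₂ * a₁) (hrel₂ : a₁ * b₂ = d₂ * b₁)
    (hrel₃ : a₂ * g₁ = b₁ * c₂) (hrel₄ : g₁ * f₂ = b₂ * c₁)
    (hrel₅ : c₁ * f₂ = c₂ * f₁) (hfd : d₂ < f₂) :
    let A₁ : Matrix (Fin 4) (Fin 4) ℝ :=
      !![d₁, a₁, b₁, 0; 0, 0, 0, g₁; 0, 0, 0, c₁; 0, 0, 0, f₁]
    let A₂ : Matrix (Fin 4) (Fin 4) ℝ :=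
      !![d₂, a₂, 0, 0; 0, 0, b₂, 0; 0, 0, 0, c₂; 0, 0, 0, f₂]
    let z : Fin 4 → ℝ :=
      ![(f₂ - d₂)⁻¹ * (f₂ ^ 2)⁻¹ * (a₂ * b₂ * c₂), (f₂ ^ 2)⁻¹ * (b₂ * c₂),
        f₂⁻¹ * c₂, 1]
    A₁.mulVec z = f₁ • z ∧ A₂.mulVec z = f₂ • z := by
  intro A₁ A₂ z
  have hfd' : f₂ - d₂ ≠ 0 := sub_ne_zero.mpr hfd.ne'
  have hf₂' : f₂ ≠ 0 := hf₂.ne'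
  constructor <;> (funext i; fin_cases i) <;>
      simp [A₁, A₂, z, Matrix.mulVec, dotProduct, Fin.sum_univ_succ] <;>
      field_simp
  · refine mul_left_cancel₀ hc₂.ne' ?_
    linear_combination (c₂*b₂) * hrel₁
      + (c₂*f₂) * hrel₂ - (f₂^2) * hrel₃
      + (a₂*f₂) * hrel₄ + (a₂*b₂) * hrel₅
  · linear_combination f₂ * hrel₄ + b₂ * hrel₅
  · linear_combination hrel₅
  · ring
end

section
/- Let Λ be a finite k-graph, u a vertex, and E ⊆ uΛ^1 a finite exhaustive set. Let {t_λ : λ ∈ Λ} be a Toeplitz–Cuntz–Krieger Λ-family in a complex *-algebra. For ∅ ≠ J ⊆ {1,…,k} write e_J = ∑_{i∈J} e_i. Then the factors t_u − t_e t_e* for e ∈ E pairwise commute, and ∏_{e∈E}(t_u − t_e t_e*) = t_u + ∑_{∅≠J⊆{1,…,k}} (−1)^{|J|} ∑_{μ} t_μ t_μ*, where the inner sum is over all μ ∈ uΛ^{e_J} such that the initial segment μ(0, e_i) lies in E for every i ∈ J. -/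
open scoped Classical in
/-- A Toeplitz–Cuntz–Krieger `Λ`-family in a `*`-algebra `A`: the vertex
elements are mutually orthogonal self-adjoint idempotents, `t_μ t_ν = t_{μν}`,
`t_μ* t_μ = t_{s(μ)}`, and `t_μ* t_ν = ∑_{(α,β) ∈ Λ^min(μ,ν)} t_α t_β*`. -/
def IsTCKFamily {k : ℕ} (Λ : KGraph k) {A : Type} [Ring A] [StarRing A]
    (t : ∀ u v : Λ.Obj, Λ.Hom u v → A) : Prop :=
  (∀ v : Λ.Obj, star (t v v (Λ.id v)) = t v v (Λ.id v)) ∧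
  (∀ v w : Λ.Obj,
    t v v (Λ.id v) * t w w (Λ.id w) = if v = w then t v v (Λ.id v) else 0) ∧
  (∀ (u v w : Λ.Obj) (μ : Λ.Hom u v) (ν : Λ.Hom v w),
    t u v μ * t v w ν = t u w (Λ.comp μ ν)) ∧
  (∀ (u v : Λ.Obj) (μ : Λ.Hom u v), star (t u v μ) * t u v μ = t v v (Λ.id v)) ∧
  (∀ (u a b : Λ.Obj) (μ : Λ.Hom u a) (ν : Λ.Hom u b),
    star (t u a μ) * t u b ν =
      ∑ᶠ p ∈ Λ.MCE μ ν, t a p.1 p.2.1 * star (t b p.1 p.2.2))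

namespace KGraph
variable {k : ℕ} {Λ : KGraph k}
open scoped Classical

lemma gen_inj {i j : Fin k} (h : gen k i = gen k j) : i = j := by
  by_contra hne
  simpa [gen, Pi.single_apply, hne] using congrFun h i

lemma factor_unique {u v a b : Λ.Obj} {α : Λ.Hom u a} {β : Λ.Hom a v}
    {α' : Λ.Hom u b} {β' : Λ.Hom b v} (hdeg : Λ.deg α = Λ.deg α')
    (h : Λ.comp α β = Λ.comp α' β') :
    (⟨a, α, β⟩ : Σ w, Λ.Hom u w × Λ.Hom w v) = ⟨b, α', β'⟩ := by
  have hdb : Λ.deg β = Λ.deg β' := by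
    have h1 : Λ.deg α + Λ.deg β = Λ.deg α' + Λ.deg β' := by
      rw [← Λ.deg_comp, ← Λ.deg_comp, h]
    rw [hdeg] at h1
    exact add_left_cancel h1
  obtain ⟨p, _, hup⟩ := Λ.factor (Λ.comp α β) (Λ.deg α) (Λ.deg β) (Λ.deg_comp α β)
  have h1 := hup ⟨a, α, β⟩ ⟨rfl, rfl, rfl⟩
  have h2 := hup ⟨b, α', β'⟩ ⟨hdeg.symm, hdb.symm, h.symm⟩
  rw [h1, h2]

lemma factor_unique_fst {u v a b : Λ.Obj} {α : Λ.Hom u a} {β : Λ.Hom a v}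
    {α' : Λ.Hom u b} {β' : Λ.Hom b v} (hdeg : Λ.deg α = Λ.deg α')
    (h : Λ.comp α β = Λ.comp α' β') :
    (⟨a, α⟩ : Λ.PathFrom u) = ⟨b, α'⟩ :=
  congrArg (fun p : Σ w, Λ.Hom u w × Λ.Hom w v => (⟨p.1, p.2.1⟩ : Λ.PathFrom u))
    (factor_unique hdeg h)

lemma factor_unique'_s17 {u v a : Λ.Obj} {α α' : Λ.Hom u a} {β β' : Λ.Hom a v}
    (hdeg : Λ.deg α = Λ.deg α') (h : Λ.comp α β = Λ.comp α' β') :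
    α = α' ∧ β = β' := by
  have := factor_unique hdeg h
  rw [Sigma.mk.inj_iff] at this
  obtain ⟨-, h2⟩ := this
  have := eq_of_heq h2
  exact ⟨congrArg Prod.fst this, congrArg Prod.snd this⟩

/-- a path of degree 0 is the identity -/
lemma eq_id_of_deg_zero {u : Λ.Obj} {μ : Λ.PathFrom u} (h : Λ.deg μ.2 = 0) :
    μ = ⟨u, Λ.id u⟩ := by
  have h1 : Λ.comp μ.2 (Λ.id μ.1) = Λ.comp (Λ.id u) μ.2 := by
    rw [Λ.comp_id, Λ.id_comp]
  have h2 : Λ.deg μ.2 = Λ.deg (Λ.id u) := by rw [h, Λ.deg_id]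
  have := factor_unique_fst h2 h1
  rw [← Sigma.eta μ] at this ⊢
  exact this

open scoped Classical

/-- `e` is an initial segment of `f` -/
def ISeg {u : Λ.Obj} (e f : Λ.PathFrom u) : Prop :=
  ∃ g : Λ.Hom e.1 f.1, Λ.comp e.2 g = f.2

lemma ISeg.refl {u : Λ.Obj} (e : Λ.PathFrom u) : ISeg e e :=
  ⟨Λ.id e.1, Λ.comp_id e.2⟩

lemma ISeg.trans {u : Λ.Obj} {e f g : Λ.PathFrom u} (h1 : ISeg e f)
    (h2 : ISeg f g) : ISeg e g := by
  obtain ⟨a, ha⟩ := h1; obtain ⟨b, hb⟩ := h2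
  exact ⟨Λ.comp a b, by rw [← Λ.assoc, ha, hb]⟩

lemma ISeg.deg_le {u : Λ.Obj} {e f : Λ.PathFrom u} (h : ISeg e f) :
    Λ.deg e.2 ≤ Λ.deg f.2 := by
  obtain ⟨a, ha⟩ := h
  rw [← ha, Λ.deg_comp]
  exact le_add_of_nonneg_right (by positivity)

lemma iseg_unique {u : Λ.Obj} {μ ν lam : Λ.PathFrom u} (h1 : ISeg μ lam)
    (h2 : ISeg ν lam) (hd : Λ.deg μ.2 = Λ.deg ν.2) : μ = ν := by
  obtain ⟨a, ha⟩ := h1; obtain ⟨b, hb⟩ := h2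
  have := factor_unique_fst hd (ha.trans hb.symm)
  rw [← Sigma.eta μ, ← Sigma.eta ν]
  exact this

lemma iseg_eq_of_deg_eq {u : Λ.Obj} {μ lam : Λ.PathFrom u} (h1 : ISeg μ lam)
    (hd : Λ.deg μ.2 = Λ.deg lam.2) : μ = lam :=
  iseg_unique h1 (ISeg.refl lam) hd

lemma exists_iseg {u : Λ.Obj} (lam : Λ.PathFrom u) (m : Fin k → ℕ)
    (hm : m ≤ Λ.deg lam.2) :
    ∃ μ : Λ.PathFrom u, Λ.deg μ.2 = m ∧ ISeg μ lam := by
  obtain ⟨⟨w, μ, ρ⟩, ⟨hd1, _, hcmp⟩, -⟩ :=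
    Λ.factor lam.2 m (Λ.deg lam.2 - m)
      (by funext i; have h : m i ≤ Λ.deg lam.2 i := hm i; simp only [Pi.add_apply, Pi.sub_apply]; omega)
  exact ⟨⟨w, μ⟩, hd1, ⟨ρ, hcmp⟩⟩

/-- If `f` is an initial segment of `lam` and `μ` is an initial segment of `lam`
with `deg f ≤ deg μ`, then `f` is an initial segment of `μ`. -/
lemma iseg_of_iseg_of_deg_le {u : Λ.Obj} {f μ lam : Λ.PathFrom u}
    (hf : ISeg f lam) (hμ : ISeg μ lam) (hd : Λ.deg f.2 ≤ Λ.deg μ.2) :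
    ISeg f μ := by
  obtain ⟨σ, hσ⟩ := hf
  obtain ⟨ρ, hρ⟩ := hμ
  have hside : Λ.deg σ = (Λ.deg μ.2 - Λ.deg f.2) + (Λ.deg lam.2 - Λ.deg μ.2) := by
    have h1 : Λ.deg lam.2 = Λ.deg f.2 + Λ.deg σ := by rw [← hσ, Λ.deg_comp]
    have h2 : Λ.deg μ.2 ≤ Λ.deg lam.2 := ISeg.deg_le ⟨ρ, hρ⟩
    funext i
    have h3 := congrFun h1 i; have h4 : Λ.deg f.2 i ≤ Λ.deg μ.2 i := hd i
    have h5 : Λ.deg μ.2 i ≤ Λ.deg lam.2 i := h2 i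
    simp only [Pi.add_apply, Pi.sub_apply] at *; omega
  obtain ⟨⟨w, σ₁, σ₂⟩, ⟨hd1, _, hcmp⟩, -⟩ :=
    Λ.factor σ (Λ.deg μ.2 - Λ.deg f.2) (Λ.deg lam.2 - Λ.deg μ.2) hside
  have hkey : Λ.comp (Λ.comp f.2 σ₁) σ₂ = Λ.comp μ.2 ρ := by
    rw [Λ.assoc, hcmp, hσ, hρ]
  have hdeq : Λ.deg (Λ.comp f.2 σ₁) = Λ.deg μ.2 := by
    rw [Λ.deg_comp, hd1]
    funext i; have h : Λ.deg f.2 i ≤ Λ.deg μ.2 i := hd i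
    simp only [Pi.add_apply, Pi.sub_apply]; omega
  have h6 : ISeg f ⟨w, Λ.comp f.2 σ₁⟩ := ⟨σ₁, rfl⟩
  have h7 := factor_unique_fst hdeq hkey
  rw [← Sigma.eta μ, ← h7]
  try exact h6

/-- common minimal extensions of two paths, as a set of paths -/
def CE2 {u : Λ.Obj} (μ e : Λ.PathFrom u) : Set (Λ.PathFrom u) :=
  {lam | Λ.deg lam.2 = Λ.deg μ.2 ⊔ Λ.deg e.2 ∧ ISeg μ lam ∧ ISeg e lam}

lemma CE2_comm {u : Λ.Obj} (μ e : Λ.PathFrom u) : CE2 μ e = CE2 e μ := by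
  ext lam; simp only [CE2, Set.mem_setOf_eq]
  constructor <;> rintro ⟨h1, h2, h3⟩ <;> exact ⟨by rw [h1, sup_comm], h3, h2⟩

/-- common minimal extensions of a finite family of paths -/
def CEs {u : Λ.Obj} (F : Finset (Λ.PathFrom u)) : Set (Λ.PathFrom u) :=
  {lam | Λ.deg lam.2 = F.sup (fun e => Λ.deg e.2) ∧ ∀ e ∈ F, ISeg e lam}

lemma CEs_empty {u : Λ.Obj} : CEs (∅ : Finset (Λ.PathFrom u)) = {⟨u, Λ.id u⟩} := by
  ext lam
  simp only [CEs, Finset.sup_empty, Finset.notMem_empty, Set.mem_setOf_eq,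
    Set.mem_singleton_iff]
  constructor
  · rintro ⟨h, -⟩
    exact eq_id_of_deg_zero h
  · rintro rfl
    exact ⟨Λ.deg_id u, fun e he => absurd he (by simp)⟩

lemma CEs_insert {u : Λ.Obj} (e : Λ.PathFrom u) (F : Finset (Λ.PathFrom u)) :
    CEs (insert e F) = ⋃ lam ∈ CEs F, CE2 lam e := by
  ext lam'
  simp only [Set.mem_iUnion, exists_prop]
  constructor
  · rintro ⟨hdeg, hiseg⟩
    rw [Finset.sup_insert] at hdeg
    have hm : F.sup (fun f => Λ.deg f.2) ≤ Λ.deg lam'.2 := by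
      rw [hdeg]; exact le_sup_right
    obtain ⟨lam, hdl, hil⟩ := exists_iseg lam' _ hm
    refine ⟨lam, ⟨hdl, fun f hf => ?_⟩, ?_, hil, ?_⟩
    · apply iseg_of_iseg_of_deg_le (hiseg f (Finset.mem_insert_of_mem hf)) hil
      rw [hdl]
      exact Finset.le_sup (f := fun f => Λ.deg f.2) hf
    · rw [hdeg, hdl, sup_comm]
    · exact hiseg e (Finset.mem_insert_self e F)
  · rintro ⟨lam, ⟨hdl, hiseg⟩, hdeg, hil, hie⟩
    refine ⟨?_, ?_⟩
    · rw [Finset.sup_insert, hdeg, hdl, sup_comm]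
    · intro f hf
      rcases Finset.mem_insert.1 hf with rfl | hf
      · exact hie
      · exact (hiseg f hf).trans hil

lemma pathFrom_finite (hΛ : Λ.IsFinite) (u : Λ.Obj) (n : Fin k → ℕ) :
    {μ : Λ.PathFrom u | Λ.deg μ.2 = n}.Finite := by
  apply Set.Finite.of_finite_image (f := Sigma.mk u)
  · apply (hΛ n).subset
    rintro p ⟨μ, hμ, rfl⟩
    exact hμ
  · exact sigma_mk_injective.injOn

lemma CE2_finite (hΛ : Λ.IsFinite) {u : Λ.Obj} (μ e : Λ.PathFrom u) :
    (CE2 μ e).Finite :=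
  (pathFrom_finite hΛ u _).subset fun lam hlam => hlam.1

lemma CEs_finite (hΛ : Λ.IsFinite) {u : Λ.Obj} (F : Finset (Λ.PathFrom u)) :
    (CEs F).Finite :=
  (pathFrom_finite hΛ u _).subset fun lam hlam => hlam.1

lemma MCE_ext {u a b : Λ.Obj} {μ : Λ.Hom u a} {ν : Λ.Hom u b}
    {p q : Σ x : Λ.Obj, Λ.Hom a x × Λ.Hom b x}
    (hp : p ∈ Λ.MCE μ ν) (hq : q ∈ Λ.MCE μ ν)
    (h : (⟨p.1, Λ.comp μ p.2.1⟩ : Λ.PathFrom u) = ⟨q.1, Λ.comp μ q.2.1⟩) :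
    p = q := by
  obtain ⟨x, π₁, π₂⟩ := p
  obtain ⟨y, ρ₁, ρ₂⟩ := q
  simp only [Sigma.mk.inj_iff] at h
  obtain ⟨rfl, heq⟩ := h
  have heq' := eq_of_heq heq
  obtain ⟨-, rfl⟩ := factor_unique'_s17 (α := μ) (α' := μ) rfl heq'
  have hc2 : Λ.comp ν π₂ = Λ.comp ν ρ₂ := by
    rw [← hp.1, ← hq.1]
  obtain ⟨-, rfl⟩ := factor_unique'_s17 (α := ν) (α' := ν) rfl hc2
  rfl

lemma MCE_finite (hΛ : Λ.IsFinite) {u a b : Λ.Obj} (μ : Λ.Hom u a)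
    (ν : Λ.Hom u b) : (Λ.MCE μ ν).Finite := by
  apply Set.Finite.of_finite_image
    (f := fun p : Σ x : Λ.Obj, Λ.Hom a x × Λ.Hom b x => (⟨u, p.1, Λ.comp μ p.2.1⟩ : Λ.Path))
  · apply (hΛ (Λ.deg μ ⊔ Λ.deg ν)).subset
    rintro q ⟨p, hp, rfl⟩
    exact hp.2
  · intro p hp q hq h
    simp only [Sigma.mk.inj_iff, heq_eq_eq, true_and] at h
    exact MCE_ext hp hq (Sigma.mk.inj_iff.2 h)

/-- the set of directions of a finite set of edges -/
noncomputable def dirs {u : Λ.Obj} (F : Finset (Λ.PathFrom u)) : Finset (Fin k) :=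
  F.biUnion fun e => Finset.univ.filter fun i => Λ.deg e.2 = gen k i

lemma mem_dirs {u : Λ.Obj} {F : Finset (Λ.PathFrom u)} {i : Fin k} :
    i ∈ dirs F ↔ ∃ e ∈ F, Λ.deg e.2 = gen k i := by
  simp [dirs]

lemma sum_gen_eq_sup (J : Finset (Fin k)) :
    ∑ i ∈ J, gen k i = J.sup (gen k) := by
  induction J using Finset.induction_on with
  | empty => simp; rfl
  | @insert a J hnotmem ih =>
    rw [Finset.sum_insert hnotmem, Finset.sup_insert, ih]
    funext j
    simp only [Pi.add_apply, Pi.sup_apply, Finset.sup_apply]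
    rcases eq_or_ne j a with rfl | hja
    · have hz : J.sup (fun i => gen k i j) = 0 := by
        apply Nat.le_antisymm _ (Nat.zero_le _)
        apply Finset.sup_le
        intro b hb
        have : b ≠ j := fun h => hnotmem (h ▸ hb)
        simp [gen, Pi.single_apply, this.symm]
      have h1 : gen k j j = 1 := by simp [gen]
      rw [h1]
      have : J.sup (gen k) j = J.sup (fun i => gen k i j) := by
        rw [Finset.sup_apply]
      omega
    · have h0 : gen k a j = 0 := by simp [gen, Pi.single_apply, hja]
      rw [h0]
      have : J.sup (gen k) j = J.sup (fun i => gen k i j) := by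
        rw [Finset.sup_apply]
      omega

lemma sup_deg_eq {u : Λ.Obj} {F : Finset (Λ.PathFrom u)} {J : Finset (Fin k)}
    (hFJ : dirs F = J) (hF : ∀ e ∈ F, ∃ i, Λ.deg e.2 = gen k i) :
    F.sup (fun e => Λ.deg e.2) = J.sup (gen k) := by
  apply le_antisymm
  · apply Finset.sup_le
    intro e he
    obtain ⟨i, hi⟩ := hF e he
    have : i ∈ J := hFJ ▸ mem_dirs.2 ⟨e, he, hi⟩
    rw [hi]
    exact Finset.le_sup this
  · apply Finset.sup_le
    intro i hi
    obtain ⟨e, he, hdeg⟩ := mem_dirs.1 (show i ∈ dirs F by rw [hFJ]; exact hi)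
    rw [← hdeg]
    exact Finset.le_sup (f := fun e => Λ.deg e.2) he

/-- if two subsets of `E` with the same direction set have a common extension,
they are equal -/
lemma eq_of_common_ext {u : Λ.Obj} {F F' : Finset (Λ.PathFrom u)}
    {lam : Λ.PathFrom u}
    (hF : ∀ e ∈ F, ∃ i, Λ.deg e.2 = gen k i)
    (hF' : ∀ e ∈ F', ∃ i, Λ.deg e.2 = gen k i)
    (hJ : dirs F = dirs F')
    (h1 : ∀ e ∈ F, ISeg e lam) (h2 : ∀ e ∈ F', ISeg e lam) : F = F' := by
  have key : ∀ (G G' : Finset (Λ.PathFrom u)),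
      (∀ e ∈ G, ∃ i, Λ.deg e.2 = gen k i) → dirs G = dirs G' →
      (∀ e ∈ G, ISeg e lam) → (∀ e ∈ G', ISeg e lam) → G ⊆ G' := by
    intro G G' hG hJ' hg1 hg2 e he
    obtain ⟨i, hi⟩ := hG e he
    have : i ∈ dirs G' := hJ' ▸ mem_dirs.2 ⟨e, he, hi⟩
    obtain ⟨e', he', hi'⟩ := mem_dirs.1 this
    have : e = e' := iseg_unique (hg1 e he) (hg2 e' he') (by rw [hi, hi'])
    exact this ▸ he'
  exact le_antisymm (key F F' hF hJ h1 h2) (key F' F hF' hJ.symm h2 h1)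

/-- the degree-count: if the elements of `F` are edges with pairwise distinct
directions (guaranteed by a common extension), `|F| = |dirs F|`. -/
lemma card_dirs {u : Λ.Obj} {F : Finset (Λ.PathFrom u)} {lam : Λ.PathFrom u}
    (hF : ∀ e ∈ F, ∃ i, Λ.deg e.2 = gen k i)
    (h1 : ∀ e ∈ F, ISeg e lam) : (dirs F).card = F.card := by
  rw [dirs, Finset.card_biUnion]
  · have : ∀ e ∈ F, (Finset.univ.filter fun i => Λ.deg e.2 = gen k i).card = 1 := by
      intro e he
      obtain ⟨i, hi⟩ := hF e he
      rw [Finset.card_eq_one]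
      exact ⟨i, by
        ext j
        simp only [Finset.mem_filter, Finset.mem_univ, true_and, Finset.mem_singleton]
        constructor
        · intro hj; exact (gen_inj (hi.symm.trans hj)).symm ▸ rfl
        · rintro rfl; exact hi⟩
    rw [Finset.sum_congr rfl this]
    simp
  · intro e he f hf hne
    simp only [Finset.disjoint_filter]
    intro i _ hei hfi
    exact absurd (iseg_unique (h1 e he) (h1 f hf) (by rw [hei, hfi])) hne

end KGraph

namespace KGraph
open scoped Classical

section Algebra

variable {k : ℕ} {Λ : KGraph k} {A : Type} [Ring A] [StarRing A]
  {t : ∀ u v : Λ.Obj, Λ.Hom u v → A} {u : Λ.Obj}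

/-- the range projection `t_e t_e^*` -/
def pp (t : ∀ u v : Λ.Obj, Λ.Hom u v → A) (u : Λ.Obj) (e : Λ.PathFrom u) : A :=
  t u e.1 e.2 * star (t u e.1 e.2)

lemma tu_mul_t (ht : IsTCKFamily Λ t) (v : Λ.Obj) (μ : Λ.Hom u v) :
    t u u (Λ.id u) * t u v μ = t u v μ := by
  rw [ht.2.2.1, Λ.id_comp]

lemma star_t_mul_tu (ht : IsTCKFamily Λ t) (v : Λ.Obj) (μ : Λ.Hom u v) :
    star (t u v μ) * t u u (Λ.id u) = star (t u v μ) := by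
  rw [← ht.1 u, ← star_mul, tu_mul_t ht]

lemma tu_mul_pp (ht : IsTCKFamily Λ t) (e : Λ.PathFrom u) :
    t u u (Λ.id u) * pp t u e = pp t u e := by
  rw [pp, ← mul_assoc, tu_mul_t ht]

lemma pp_mul_tu (ht : IsTCKFamily Λ t) (e : Λ.PathFrom u) :
    pp t u e * t u u (Λ.id u) = pp t u e := by
  rw [pp, mul_assoc, star_t_mul_tu ht]

lemma tu_mul_tu (ht : IsTCKFamily Λ t) :
    t u u (Λ.id u) * t u u (Λ.id u) = t u u (Λ.id u) := by
  rw [ht.2.1, if_pos rfl]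

/-- Key computation: `p_μ p_e = ∑_{λ ∈ CE2 μ e} p_λ`. -/
lemma pp_mul_pp (ht : IsTCKFamily Λ t) (hΛ : Λ.IsFinite) (μ e : Λ.PathFrom u) :
    pp t u μ * pp t u e = ∑ᶠ lam ∈ CE2 μ e, pp t u lam := by
  have hfin := MCE_finite hΛ μ.2 e.2
  have h1 : pp t u μ * pp t u e =
      t u μ.1 μ.2 * ((star (t u μ.1 μ.2) * t u e.1 e.2) * star (t u e.1 e.2)) := by
    rw [pp, pp]; noncomm_ring
  rw [h1, ht.2.2.2.2 u μ.1 e.1 μ.2 e.2,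
    finsum_mem_eq_finite_toFinset_sum _ hfin,
    finsum_mem_eq_finite_toFinset_sum _ (CE2_finite hΛ μ e),
    Finset.sum_mul, Finset.mul_sum]
  apply Finset.sum_bij
    (i := fun p _ => (⟨p.1, Λ.comp μ.2 p.2.1⟩ : Λ.PathFrom u))
  · intro p hp
    rw [Set.Finite.mem_toFinset] at hp ⊢
    refine ⟨hp.2, ⟨p.2.1, rfl⟩, ⟨p.2.2, hp.1.symm⟩⟩
  · intro p hp q hq h
    rw [Set.Finite.mem_toFinset] at hp hq
    exact MCE_ext hp hq h
  · intro lam hlam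
    rw [Set.Finite.mem_toFinset] at hlam
    obtain ⟨hdeg, ⟨α, hα⟩, ⟨β, hβ⟩⟩ := hlam
    refine ⟨⟨lam.1, α, β⟩, ?_, ?_⟩
    · rw [Set.Finite.mem_toFinset]
      exact ⟨by rw [hα, ← hβ], by rw [hα, hdeg]⟩
    · show (⟨lam.1, Λ.comp μ.2 α⟩ : Λ.PathFrom u) = lam
      rw [hα]
  · intro p hp
    rw [Set.Finite.mem_toFinset] at hp
    show _ = pp t u (⟨p.1, Λ.comp μ.2 p.2.1⟩ : Λ.PathFrom u)
    rw [pp]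
    have hstar : star (t u p.1 (Λ.comp μ.2 p.2.1)) =
        star (t e.1 p.1 p.2.2) * star (t u e.1 e.2) := by
      rw [hp.1, ← ht.2.2.1, star_mul]
    rw [hstar, ← ht.2.2.1]
    noncomm_ring


noncomputable def Q (t : ∀ u v : Λ.Obj, Λ.Hom u v → A) (u : Λ.Obj)
    (F : Finset (Λ.PathFrom u)) : A :=
  ∑ᶠ lam ∈ CEs F, pp t u lam

lemma pp_comm (ht : IsTCKFamily Λ t) (hΛ : Λ.IsFinite) (μ e : Λ.PathFrom u) :
    pp t u μ * pp t u e = pp t u e * pp t u μ := by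
  rw [pp_mul_pp ht hΛ, pp_mul_pp ht hΛ, CE2_comm]

lemma commute_factors (ht : IsTCKFamily Λ t) (hΛ : Λ.IsFinite)
    (e f : Λ.PathFrom u) :
    Commute (t u u (Λ.id u) - pp t u e) (t u u (Λ.id u) - pp t u f) := by
  show _ = _
  have h1 : (t u u (Λ.id u) - pp t u e) * (t u u (Λ.id u) - pp t u f) =
      t u u (Λ.id u) - pp t u f - pp t u e + pp t u e * pp t u f := by
    rw [sub_mul, mul_sub, mul_sub, tu_mul_tu ht, tu_mul_pp ht, pp_mul_tu ht]
    abel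
  have h2 : (t u u (Λ.id u) - pp t u f) * (t u u (Λ.id u) - pp t u e) =
      t u u (Λ.id u) - pp t u e - pp t u f + pp t u f * pp t u e := by
    rw [sub_mul, mul_sub, mul_sub, tu_mul_tu ht, tu_mul_pp ht, pp_mul_tu ht]
    abel
  rw [h1, h2, pp_comm ht hΛ]
  abel

lemma Q_empty (ht : IsTCKFamily Λ t) : Q t u ∅ = t u u (Λ.id u) := by
  rw [Q, CEs_empty, finsum_mem_singleton, pp, ht.1 u, tu_mul_tu ht]

lemma Q_mul_tu (ht : IsTCKFamily Λ t) (hΛ : Λ.IsFinite)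
    (F : Finset (Λ.PathFrom u)) : Q t u F * t u u (Λ.id u) = Q t u F := by
  rw [Q, finsum_mem_eq_finite_toFinset_sum _ (CEs_finite hΛ F), Finset.sum_mul]
  exact Finset.sum_congr rfl fun lam _ => pp_mul_tu ht lam

lemma CE2_disjoint (hΛ : Λ.IsFinite) {F : Finset (Λ.PathFrom u)}
    (e : Λ.PathFrom u) :
    (↑(CEs_finite hΛ F).toFinset : Set (Λ.PathFrom u)).PairwiseDisjoint
      (fun lam => (CE2_finite hΛ lam e).toFinset) := by
  intro lam₁ h₁ lam₂ h₂ hne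
  simp only [Finset.coe_sort_coe, Set.Finite.coe_toFinset] at h₁ h₂
  simp only [Function.onFun]
  rw [Finset.disjoint_left]
  intro lam' hl1 hl2
  rw [Set.Finite.mem_toFinset] at hl1 hl2
  exact hne (iseg_unique hl1.2.1 hl2.2.1 (h₁.1.trans h₂.1.symm))

lemma Q_mul_pp (ht : IsTCKFamily Λ t) (hΛ : Λ.IsFinite)
    (F : Finset (Λ.PathFrom u)) (e : Λ.PathFrom u) :
    Q t u F * pp t u e = Q t u (insert e F) := by
  rw [Q, Q, finsum_mem_eq_finite_toFinset_sum _ (CEs_finite hΛ F),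
    finsum_mem_eq_finite_toFinset_sum _ (CEs_finite hΛ (insert e F)),
    Finset.sum_mul]
  have h1 : ∀ lam ∈ (CEs_finite hΛ F).toFinset, pp t u lam * pp t u e =
      ∑ lam' ∈ (CE2_finite hΛ lam e).toFinset, pp t u lam' := fun lam _ => by
    rw [pp_mul_pp ht hΛ, finsum_mem_eq_finite_toFinset_sum _ (CE2_finite hΛ lam e)]
  rw [Finset.sum_congr rfl h1, ← Finset.sum_biUnion (CE2_disjoint hΛ e)]
  apply Finset.sum_congr _ fun _ _ => rfl
  ext lam'
  simp only [Finset.mem_biUnion, Set.Finite.mem_toFinset, CEs_insert,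
    Set.mem_iUnion, exists_prop]

lemma tu_noncommProd (ht : IsTCKFamily Λ t) (hΛ : Λ.IsFinite)
    (F : Finset (Λ.PathFrom u))
    (hc : (↑F : Set (Λ.PathFrom u)).Pairwise fun e f =>
      Commute (t u u (Λ.id u) - pp t u e) (t u u (Λ.id u) - pp t u f)) :
    t u u (Λ.id u) * F.noncommProd (fun e => t u u (Λ.id u) - pp t u e) hc =
      ∑ F' ∈ F.powerset, (-1 : A) ^ F'.card * Q t u F' := by
  induction F using Finset.induction_on with
  | empty =>
    simp only [Finset.noncommProd_empty, mul_one, Finset.powerset_empty,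
      Finset.sum_singleton, Finset.card_empty, pow_zero, one_mul, Q_empty ht]
  | @insert a F ha ih =>
    rw [Finset.noncommProd_insert_of_notMem' F a _ _ ha, ← mul_assoc,
      ih (hc.mono (by exact_mod_cast Finset.subset_insert a F)),
      Finset.sum_powerset_insert ha]
    rw [mul_sub, Finset.sum_mul, Finset.sum_mul]
    have e1 : ∀ F' ∈ F.powerset,
        ((-1 : A) ^ F'.card * Q t u F') * t u u (Λ.id u) =
          (-1 : A) ^ F'.card * Q t u F' := fun F' _ => by
      rw [mul_assoc, Q_mul_tu ht hΛ]
    have e2 : ∀ F' ∈ F.powerset,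
        ((-1 : A) ^ F'.card * Q t u F') * pp t u a =
          -((-1 : A) ^ (insert a F').card * Q t u (insert a F')) := by
      intro F' hF'
      have hn : a ∉ F' := fun h => ha (Finset.mem_powerset.1 hF' h)
      rw [mul_assoc, Q_mul_pp ht hΛ, Finset.card_insert_of_notMem hn, pow_succ]
      simp [mul_neg, neg_mul]
    rw [Finset.sum_congr rfl e1, Finset.sum_congr rfl e2]
    simp only [Finset.sum_neg_distrib, sub_neg_eq_add]



lemma tu_absorb (ht : IsTCKFamily Λ t) (F : Finset (Λ.PathFrom u))
    (hc : (↑F : Set (Λ.PathFrom u)).Pairwise fun e f =>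
      Commute (t u u (Λ.id u) - pp t u e) (t u u (Λ.id u) - pp t u f))
    (hne : F.Nonempty) :
    t u u (Λ.id u) * F.noncommProd (fun e => t u u (Λ.id u) - pp t u e) hc =
      F.noncommProd (fun e => t u u (Λ.id u) - pp t u e) hc := by
  induction F using Finset.induction_on with
  | empty => exact absurd hne (by simp)
  | @insert a F ha ih =>
    rw [Finset.noncommProd_insert_of_notMem F a _ _ ha, ← mul_assoc,
      mul_sub, tu_mul_tu ht, tu_mul_pp ht]

/-- the index set for `J` in the main formula -/
def RJ (E : Finset (Λ.PathFrom u)) (J : Finset (Fin k)) : Set (Λ.PathFrom u) :=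
  {μ : Λ.PathFrom u |
    Λ.deg μ.2 = ∑ i ∈ J, KGraph.gen k i ∧
    ∀ i ∈ J, ∃ (x : Λ.Obj) (α : Λ.Hom u x) (β : Λ.Hom x μ.1),
      Λ.deg α = KGraph.gen k i ∧ Λ.comp α β = μ.2 ∧
        (⟨x, α⟩ : Λ.PathFrom u) ∈ E}

lemma RJ_finite (hΛ : Λ.IsFinite) (E : Finset (Λ.PathFrom u))
    (J : Finset (Fin k)) : (RJ E J).Finite :=
  (pathFrom_finite hΛ u _).subset fun μ hμ => hμ.1

lemma fiber_sum (ht : IsTCKFamily Λ t) (hΛ : Λ.IsFinite)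
    (E : Finset (Λ.PathFrom u))
    (hedges : ∀ e ∈ E, ∃ i, Λ.deg e.2 = gen k i)
    (J : Finset (Fin k)) (hJ : J.Nonempty) :
    ∑ F ∈ (E.powerset.filter fun F => ¬F = ∅).filter fun F => dirs F = J,
        Q t u F = ∑ᶠ μ ∈ RJ E J, pp t u μ := by
  have hmem : ∀ {F}, F ∈ (E.powerset.filter fun F => ¬F = ∅).filter
      (fun F => dirs F = J) → F ⊆ E ∧ F ≠ ∅ ∧ dirs F = J := by
    intro F hF
    simp only [Finset.mem_filter, Finset.mem_powerset] at hF
    exact ⟨hF.1.1, hF.1.2, hF.2⟩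
  have key : ∀ F, F ⊆ E → dirs F = J →
      ∀ μ ∈ CEs F, μ ∈ RJ E J := by
    intro F hFE hdirs μ hμ
    have hedge' : ∀ e ∈ F, ∃ i, Λ.deg e.2 = gen k i := fun e he => hedges e (hFE he)
    refine ⟨?_, ?_⟩
    · rw [hμ.1, sup_deg_eq hdirs hedge', sum_gen_eq_sup]
    · intro i hi
      obtain ⟨e, heF, hdeg⟩ := mem_dirs.1 (hdirs ▸ hi)
      obtain ⟨β, hβ⟩ := hμ.2 e heF
      exact ⟨e.1, e.2, β, hdeg, hβ, hFE heF⟩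
  rw [finsum_mem_eq_finite_toFinset_sum _ (RJ_finite hΛ E J)]
  have h1 : ∀ F ∈ (E.powerset.filter fun F => ¬F = ∅).filter (fun F => dirs F = J),
      Q t u F = ∑ μ ∈ (CEs_finite hΛ F).toFinset, pp t u μ := fun F _ => by
    rw [Q, finsum_mem_eq_finite_toFinset_sum _ (CEs_finite hΛ F)]
  rw [Finset.sum_congr rfl h1, ← Finset.sum_biUnion]
  · apply Finset.sum_congr _ fun _ _ => rfl
    ext μ
    simp only [Finset.mem_biUnion, Set.Finite.mem_toFinset]
    constructor
    · rintro ⟨F, hF, hμ⟩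
      obtain ⟨hFE, -, hdirs⟩ := hmem hF
      exact key F hFE hdirs μ hμ
    · intro hμ
      obtain ⟨hdeg, hcond⟩ := hμ
      have hsel : ∀ i ∈ J, ∃ e : Λ.PathFrom u,
          e ∈ E ∧ Λ.deg e.2 = gen k i ∧ ISeg e μ := by
        intro i hi
        obtain ⟨x, α, β, hα, hcomp, hxE⟩ := hcond i hi
        exact ⟨⟨x, α⟩, hxE, hα, ⟨β, hcomp⟩⟩
      choose sel hsel1 hsel2 hsel3 using hsel
      refine ⟨J.attach.image (fun i => sel i.1 i.2), ?_, ?_⟩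
      · simp only [Finset.mem_filter, Finset.mem_powerset]
        have hdirs : dirs (J.attach.image (fun i => sel i.1 i.2)) = J := by
          ext j
          rw [mem_dirs]
          constructor
          · rintro ⟨e, he, hdeg'⟩
            simp only [Finset.mem_image, Finset.mem_attach, true_and] at he
            obtain ⟨i, rfl⟩ := he
            exact gen_inj ((hsel2 i.1 i.2).symm.trans hdeg') ▸ i.2
          · intro hj
            exact ⟨sel j hj, Finset.mem_image.2 ⟨⟨j, hj⟩, Finset.mem_attach _ _, rfl⟩,
              hsel2 j hj⟩
        refine ⟨⟨fun e he => ?_, ?_⟩, hdirs⟩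
        · simp only [Finset.mem_image, Finset.mem_attach, true_and] at he
          obtain ⟨i, rfl⟩ := he
          exact hsel1 i.1 i.2
        · obtain ⟨j, hj⟩ := hJ
          apply Finset.ne_empty_of_mem
            (Finset.mem_image.2 ⟨⟨j, hj⟩, Finset.mem_attach _ _, rfl⟩)
      · have hdirs : dirs (J.attach.image (fun i => sel i.1 i.2)) = J := by
          ext j
          rw [mem_dirs]
          constructor
          · rintro ⟨e, he, hdeg'⟩
            simp only [Finset.mem_image, Finset.mem_attach, true_and] at he
            obtain ⟨i, rfl⟩ := he
            exact gen_inj ((hsel2 i.1 i.2).symm.trans hdeg') ▸ i.2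
          · intro hj
            exact ⟨sel j hj, Finset.mem_image.2 ⟨⟨j, hj⟩, Finset.mem_attach _ _, rfl⟩,
              hsel2 j hj⟩
        have hedge' : ∀ e ∈ J.attach.image (fun i => sel i.1 i.2),
            ∃ i, Λ.deg e.2 = gen k i := by
          intro e he
          simp only [Finset.mem_image, Finset.mem_attach, true_and] at he
          obtain ⟨i, rfl⟩ := he
          exact ⟨i.1, hsel2 i.1 i.2⟩
        refine ⟨?_, ?_⟩
        · rw [sup_deg_eq hdirs hedge', ← sum_gen_eq_sup, hdeg]
        · intro e he
          simp only [Finset.mem_image, Finset.mem_attach, true_and] at he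
          obtain ⟨i, rfl⟩ := he
          exact hsel3 i.1 i.2
  · intro F₁ h₁ F₂ h₂ hne
    simp only [Finset.coe_filter] at h₁ h₂
    obtain ⟨hF₁, -, hd₁⟩ := hmem (by simpa using h₁)
    obtain ⟨hF₂, -, hd₂⟩ := hmem (by simpa using h₂)
    simp only [Function.onFun]
    rw [Finset.disjoint_left]
    intro μ hμ₁ hμ₂
    rw [Set.Finite.mem_toFinset] at hμ₁ hμ₂
    exact hne (eq_of_common_ext (fun e he => hedges e (hF₁ he))
      (fun e he => hedges e (hF₂ he)) (hd₁.trans hd₂.symm) hμ₁.2 hμ₂.2)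


lemma regroup (ht : IsTCKFamily Λ t) (hΛ : Λ.IsFinite)
    (E : Finset (Λ.PathFrom u))
    (hedges : ∀ e ∈ E, ∃ i, Λ.deg e.2 = gen k i) :
    ∑ F ∈ E.powerset, (-1 : A) ^ F.card * Q t u F =
      t u u (Λ.id u) +
        ∑ J ∈ Finset.univ.filter fun J : Finset (Fin k) => J.Nonempty,
          (-1 : A) ^ J.card * ∑ᶠ μ ∈ RJ E J, pp t u μ := by
  rw [← Finset.sum_filter_add_sum_filter_not E.powerset (fun F => F = ∅)]
  congr 1
  · have hfe : E.powerset.filter (fun F => F = ∅) = {∅} := by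
      ext F
      simp only [Finset.mem_filter, Finset.mem_powerset, Finset.mem_singleton,
        and_iff_right_iff_imp]
      rintro rfl
      exact Finset.empty_subset E
    rw [hfe, Finset.sum_singleton, Finset.card_empty, pow_zero, one_mul, Q_empty ht]
  · have hstep : ∀ F ∈ E.powerset.filter (fun F => ¬F = ∅),
        (-1 : A) ^ F.card * Q t u F = (-1 : A) ^ (dirs F).card * Q t u F := by
      intro F hF
      simp only [Finset.mem_filter, Finset.mem_powerset] at hF
      by_cases hCE : (CEs F).Nonempty
      · obtain ⟨lam, hlam⟩ := hCE
        rw [card_dirs (fun e he => hedges e (hF.1 he)) hlam.2]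
      · rw [Set.not_nonempty_iff_eq_empty] at hCE
        rw [Q, hCE, finsum_mem_empty, mul_zero, mul_zero]
    rw [Finset.sum_congr rfl hstep]
    have hmaps : ∀ F ∈ E.powerset.filter (fun F => ¬F = ∅),
        dirs F ∈ Finset.univ.filter fun J : Finset (Fin k) => J.Nonempty := by
      intro F hF
      simp only [Finset.mem_filter, Finset.mem_powerset] at hF
      obtain ⟨e, he⟩ := Finset.nonempty_of_ne_empty hF.2
      obtain ⟨i, hi⟩ := hedges e (hF.1 he)
      exact Finset.mem_filter.2 ⟨Finset.mem_univ _, ⟨i, mem_dirs.2 ⟨e, he, hi⟩⟩⟩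
    rw [← Finset.sum_fiberwise_of_maps_to hmaps
      (fun F => (-1 : A) ^ (dirs F).card * Q t u F)]
    apply Finset.sum_congr rfl
    intro J hJmem
    have hJ : J.Nonempty := (Finset.mem_filter.1 hJmem).2
    have hinner : ∀ F ∈ (E.powerset.filter fun F => ¬F = ∅).filter
        (fun F => dirs F = J),
        (-1 : A) ^ (dirs F).card * Q t u F = (-1 : A) ^ J.card * Q t u F := by
      intro F hF
      rw [(Finset.mem_filter.1 hF).2]
    rw [Finset.sum_congr rfl hinner, ← Finset.mul_sum,
      fiber_sum ht hΛ E hedges J hJ]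

end Algebra
end KGraph

/-- For a finite exhaustive set `E ⊆ uΛ^1` and a Toeplitz–Cuntz–Krieger family
`{t_λ}` in a complex `*`-algebra, the factors `t_u - t_e t_e*` for `e ∈ E`
pairwise commute, and `∏_{e ∈ E}(t_u - t_e t_e*) = t_u + ∑_{∅≠J⊆{1,…,k}} (-1)^{|J|}
∑_{μ ∈ uΛ^{e_J}, μ(0,e_i) ∈ E ∀ i ∈ J} t_μ t_μ*`. -/
theorem statement17 {k : ℕ} (Λ : KGraph k) (hΛ : Λ.IsFinite)
    (u : Λ.Obj) (E : Finset (Λ.PathFrom u))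
    (hE : Λ.IsExhaustive u (↑E : Set (Λ.PathFrom u)))
    {A : Type} [Ring A] [Algebra ℂ A] [StarRing A] [StarModule ℂ A]
    (t : ∀ u v : Λ.Obj, Λ.Hom u v → A) (ht : IsTCKFamily Λ t) :
    ∃ comm : (↑E : Set (Λ.PathFrom u)).Pairwise fun e f =>
        Commute (t u u (Λ.id u) - t u e.1 e.2 * star (t u e.1 e.2))
          (t u u (Λ.id u) - t u f.1 f.2 * star (t u f.1 f.2)),
      E.noncommProd
          (fun e => t u u (Λ.id u) - t u e.1 e.2 * star (t u e.1 e.2)) comm =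
        t u u (Λ.id u) +
          ∑ J ∈ Finset.univ.filter fun J : Finset (Fin k) => J.Nonempty,
            (-1 : A) ^ J.card *
              ∑ᶠ μ ∈ {μ : Λ.PathFrom u |
                  Λ.deg μ.2 = ∑ i ∈ J, KGraph.gen k i ∧
                  ∀ i ∈ J, ∃ (x : Λ.Obj) (α : Λ.Hom u x) (β : Λ.Hom x μ.1),
                    Λ.deg α = KGraph.gen k i ∧ Λ.comp α β = μ.2 ∧
                      (⟨x, α⟩ : Λ.PathFrom u) ∈ E},
                t u μ.1 μ.2 * star (t u μ.1 μ.2) := by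
  obtain ⟨hedge, -, hexh⟩ := hE
  have hedges : ∀ e ∈ E, ∃ i, Λ.deg e.2 = KGraph.gen k i := fun e he => hedge he
  have hne : E.Nonempty := by
    obtain ⟨e, he, -⟩ := hexh ⟨u, Λ.id u⟩
    exact ⟨e, he⟩
  have comm : (↑E : Set (Λ.PathFrom u)).Pairwise fun e f =>
      Commute (t u u (Λ.id u) - t u e.1 e.2 * star (t u e.1 e.2))
        (t u u (Λ.id u) - t u f.1 f.2 * star (t u f.1 f.2)) :=
    fun e _ f _ _ => KGraph.commute_factors ht hΛ e f
  refine ⟨comm, ?_⟩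
  show E.noncommProd (fun e => t u u (Λ.id u) - KGraph.pp t u e) comm =
    t u u (Λ.id u) +
      ∑ J ∈ Finset.univ.filter fun J : Finset (Fin k) => J.Nonempty,
        (-1 : A) ^ J.card * ∑ᶠ μ ∈ KGraph.RJ E J, KGraph.pp t u μ
  rw [← KGraph.tu_absorb ht E comm hne, KGraph.tu_noncommProd ht hΛ E comm,
    KGraph.regroup ht hΛ E hedges]
end

section
/- Let d_1, d_2, a_1, a_2 be positive real numbers with a_1 d_2 = a_2 d_1, and let r_1, r_2 be real numbers with r_1 ≥ ln d_1, r_2 ≥ ln d_2, and r_1 = ln d_1 or r_2 = ln d_2. Suppose p_u, p_v ≥ 0 are real numbers satisfying 0 ≤ (1 − d_1 e^{−r_1})(1 − d_2 e^{−r_2}) p_u − (a_1 e^{−r_1} + a_2 e^{−r_2} − d_1 a_2 e^{−(r_1+r_2)}) p_v. Then p_v = 0. -/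
/-- The numerical core of Lemma 4.2: if `d₁, d₂, a₁, a₂ > 0` with `a₁d₂ = a₂d₁`,
`r₁ ≥ ln d₁`, `r₂ ≥ ln d₂` with equality in at least one case, and `p_u, p_v ≥ 0`
satisfy `0 ≤ (1-d₁e^{-r₁})(1-d₂e^{-r₂})p_u - (a₁e^{-r₁} + a₂e^{-r₂} -
d₁a₂e^{-(r₁+r₂)})p_v`, then `p_v = 0`. -/
theorem statement18 (d₁ d₂ a₁ a₂ : ℝ)
    (hd₁ : 0 < d₁) (hd₂ : 0 < d₂) (ha₁ : 0 < a₁) (ha₂ : 0 < a₂)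
    (hrel : a₁ * d₂ = a₂ * d₁)
    (r₁ r₂ : ℝ) (hr₁ : Real.log d₁ ≤ r₁) (hr₂ : Real.log d₂ ≤ r₂)
    (hcrit : r₁ = Real.log d₁ ∨ r₂ = Real.log d₂)
    (p_u p_v : ℝ) (hpu : 0 ≤ p_u) (hpv : 0 ≤ p_v)
    (hineq : 0 ≤ (1 - d₁ * Real.exp (-r₁)) * (1 - d₂ * Real.exp (-r₂)) * p_u -
      (a₁ * Real.exp (-r₁) + a₂ * Real.exp (-r₂) -
        d₁ * a₂ * Real.exp (-(r₁ + r₂))) * p_v) :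
    p_v = 0 := by
  have hx : Real.exp (-(r₁ + r₂)) = Real.exp (-r₁) * Real.exp (-r₂) := by
    rw [neg_add, Real.exp_add]
  rw [hx] at hineq
  set x := Real.exp (-r₁) with hxdef
  set y := Real.exp (-r₂) with hydef
  have hxpos : 0 < x := Real.exp_pos _
  have hypos : 0 < y := Real.exp_pos _
  have hple : p_v ≤ 0 := by
    rcases hcrit with h | h
    · have hdx : d₁ * x = 1 := by
        rw [hxdef, h, Real.exp_neg, Real.exp_log hd₁, mul_inv_cancel₀ hd₁.ne']
      have e1 : (1 - d₁ * x) * (1 - d₂ * y) * p_u = 0 := by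
        have : 1 - d₁ * x = 0 := by linarith
        rw [this]; ring
      have e2 : a₁ * x + a₂ * y - d₁ * a₂ * (x * y) = a₁ * x := by
        have : d₁ * a₂ * (x * y) = a₂ * y * (d₁ * x) := by ring
        rw [this, hdx]; ring
      rw [e1, e2] at hineq
      nlinarith [mul_pos ha₁ hxpos]
    · have hdy : d₂ * y = 1 := by
        rw [hydef, h, Real.exp_neg, Real.exp_log hd₂, mul_inv_cancel₀ hd₂.ne']
      have e1 : (1 - d₁ * x) * (1 - d₂ * y) * p_u = 0 := by
        have : 1 - d₂ * y = 0 := by linarith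
        rw [this]; ring
      have e2 : a₁ * x + a₂ * y - d₁ * a₂ * (x * y) = a₂ * y := by
        have h3 : d₁ * a₂ * (x * y) = a₁ * x * (d₂ * y) := by
          linear_combination (-(x * y)) * hrel
        rw [h3, hdy]; ring
      rw [e1, e2] at hineq
      nlinarith [mul_pos ha₂ hypos]
  linarith
end
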